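/- arXiv:2403.16773 — 3 statements merged into one kernel-verified Lean document; each statement's English description precedes it below -/
import Mathlib

section
/- With the true covariate matrix X, the score of the negative log-likelihood has mean zero at the true parameter: the gradient ∇_θ L(θ) exists at θ0 = (ρ0, β0ᵀ, σ0²)ᵀ and E[∇_θ L(θ0)] = 0 ∈ ℝ^{p+2}. -/
open MeasureTheory ProbabilityTheory Matrix
open scoped Matrix

namespace PSAR

/-- `S(ρ) = I_N − ρ W`. -/
noncomputable def Smat {N : ℕ} (W : Matrix (Fin N) (Fin N) ℝ) (ρ : ℝ) :
    Matrix (Fin N) (Fin N) ℝ :=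
  1 - ρ • W

/-- `Ω(ρ, σ²) = σ² I_N + λ² S(ρ) S(ρ)ᵀ`. -/
noncomputable def Omat {N : ℕ} (W : Matrix (Fin N) (Fin N) ℝ) (lam2 ρ σ2 : ℝ) :
    Matrix (Fin N) (Fin N) ℝ :=
  σ2 • (1 : Matrix (Fin N) (Fin N) ℝ) + lam2 • (Smat W ρ * (Smat W ρ)ᵀ)

/-- `𝕎S(ρ) = W S(ρ)ᵀ + S(ρ) Wᵀ`. -/
noncomputable def WSmat {N : ℕ} (W : Matrix (Fin N) (Fin N) ℝ) (ρ : ℝ) :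
    Matrix (Fin N) (Fin N) ℝ :=
  W * (Smat W ρ)ᵀ + Smat W ρ * Wᵀ

/-- `𝕎(ρ) = Wᵀ S(ρ) + S(ρ)ᵀ W` (least squares version). -/
noncomputable def WLSmat {N : ℕ} (W : Matrix (Fin N) (Fin N) ℝ) (ρ : ℝ) :
    Matrix (Fin N) (Fin N) ℝ :=
  Wᵀ * Smat W ρ + (Smat W ρ)ᵀ * W

/-- The negative log-likelihood
`L(θ) = −log det S(ρ) + (1/2) log det Ω(ρ,σ²) + (1/2)(S(ρ)Ys − Xβ)ᵀ Ω(ρ,σ²)⁻¹ (S(ρ)Ys − Xβ)`. -/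
noncomputable def nll {N p1 p2 : ℕ} (W : Matrix (Fin N) (Fin N) ℝ) (lam2 : ℝ)
    (X : Matrix (Fin N) (Fin p1 ⊕ Fin p2) ℝ) (Ys : Fin N → ℝ)
    (ρ : ℝ) (β : Fin p1 ⊕ Fin p2 → ℝ) (σ2 : ℝ) : ℝ :=
  - Real.log (Smat W ρ).det + (1 / 2) * Real.log (Omat W lam2 ρ σ2).det
    + (1 / 2) * ((Smat W ρ *ᵥ Ys - X *ᵥ β) ⬝ᵥ
        ((Omat W lam2 ρ σ2)⁻¹ *ᵥ (Smat W ρ *ᵥ Ys - X *ᵥ β)))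

/-- Diagonal matrix `d(ρ)` with `d(ρ)_{ii} = 1/(S(ρ)ᵀ S(ρ))_{ii}`. -/
noncomputable def dmat {N : ℕ} (W : Matrix (Fin N) (Fin N) ℝ) (ρ : ℝ) :
    Matrix (Fin N) (Fin N) ℝ :=
  Matrix.diagonal fun i => ((((Smat W ρ)ᵀ * Smat W ρ) i i)⁻¹)

/-- Entrywise first derivative `ḋ(ρ)` of `d(ρ)` in `ρ`. -/
noncomputable def dmatDot {N : ℕ} (W : Matrix (Fin N) (Fin N) ℝ) (ρ : ℝ) :
    Matrix (Fin N) (Fin N) ℝ :=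
  Matrix.diagonal fun i => deriv (fun r => ((((Smat W r)ᵀ * Smat W r) i i)⁻¹)) ρ

/-- Entrywise second derivative `d̈(ρ)` of `d(ρ)` in `ρ`. -/
noncomputable def dmatDDot {N : ℕ} (W : Matrix (Fin N) (Fin N) ℝ) (ρ : ℝ) :
    Matrix (Fin N) (Fin N) ℝ :=
  Matrix.diagonal fun i => deriv (deriv (fun r => ((((Smat W r)ᵀ * Smat W r) i i)⁻¹))) ρ

/-- Least squares objective `L_LS(γ) = ‖d(ρ) S(ρ)ᵀ (S(ρ)Y − Xβ)‖²`. -/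
noncomputable def lsObj {N p1 p2 : ℕ} (W : Matrix (Fin N) (Fin N) ℝ)
    (X : Matrix (Fin N) (Fin p1 ⊕ Fin p2) ℝ) (Y : Fin N → ℝ)
    (ρ : ℝ) (β : Fin p1 ⊕ Fin p2 → ℝ) : ℝ :=
  ((dmat W ρ * (Smat W ρ)ᵀ) *ᵥ (Smat W ρ *ᵥ Y - X *ᵥ β)) ⬝ᵥ
    ((dmat W ρ * (Smat W ρ)ᵀ) *ᵥ (Smat W ρ *ᵥ Y - X *ᵥ β))

/-- Observed response `Y* = S0⁻¹(Xβ0 + E) + ε`. -/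
noncomputable def Yobs {N p1 p2 : ℕ} (W : Matrix (Fin N) (Fin N) ℝ) (ρ0 : ℝ)
    (X : Matrix (Fin N) (Fin p1 ⊕ Fin p2) ℝ) (β0 : Fin p1 ⊕ Fin p2 → ℝ)
    (E ε : Fin N → ℝ) : Fin N → ℝ :=
  (Smat W ρ0)⁻¹ *ᵥ (X *ᵥ β0 + E) + ε

/-- True response `Y = S0⁻¹(Xβ0 + E)`. -/
noncomputable def Ytrue {N p1 p2 : ℕ} (W : Matrix (Fin N) (Fin N) ℝ) (ρ0 : ℝ)
    (X : Matrix (Fin N) (Fin p1 ⊕ Fin p2) ℝ) (β0 : Fin p1 ⊕ Fin p2 → ℝ)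
    (E : Fin N → ℝ) : Fin N → ℝ :=
  (Smat W ρ0)⁻¹ *ᵥ (X *ᵥ β0 + E)

/-- Observed covariates `X* = (X1, X2 + Ex)`. -/
noncomputable def Xobs {N p1 p2 : ℕ} (X : Matrix (Fin N) (Fin p1 ⊕ Fin p2) ℝ)
    (Ex : Fin N → Fin p2 → ℝ) : Matrix (Fin N) (Fin p1 ⊕ Fin p2) ℝ :=
  X + Matrix.of fun i j => Sum.elim (fun _ => (0 : ℝ)) (fun k => Ex i k) j

/-- All the noise entries of `E`, `ε`, `Ex` gathered as a single family. -/
def noiseFam {Ωs : Type*} {N p2 : ℕ} (E ε : Ωs → Fin N → ℝ)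
    (Ex : Ωs → Fin N → Fin p2 → ℝ) :
    (Fin N ⊕ Fin N ⊕ Fin N × Fin p2) → Ωs → ℝ :=
  fun z ω => Sum.elim (fun i => E ω i) (Sum.elim (fun i => ε ω i) (fun q => Ex ω q.1 q.2)) z


/-! ### Auxiliary machinery -/

/-- Derivative of a determinant along a path (Jacobi's formula). -/
theorem hasDerivAt_det_aux {n : ℕ} {M : ℝ → Matrix (Fin n) (Fin n) ℝ}
    {M' : Matrix (Fin n) (Fin n) ℝ} {t0 : ℝ}
    (h : ∀ i j, HasDerivAt (fun t => M t i j) (M' i j) t0) :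
    HasDerivAt (fun t => (M t).det) (((M t0).adjugate * M').trace) t0 := by
  classical
  have h1 : HasDerivAt (fun t => (M t).det)
      (∑ σ : Equiv.Perm (Fin n), ((Equiv.Perm.sign σ : ℤ) : ℝ) *
        ∑ i, (∏ j ∈ Finset.univ.erase i, M t0 (σ j) j) • M' (σ i) i) t0 := by
    simp only [Matrix.det_apply']
    exact HasDerivAt.fun_sum fun σ _ =>
      (HasDerivAt.fun_finsetProd fun i _ => h (σ i) i).const_mul _
  have h2 : ((M t0).adjugate * M').trace
      = ∑ σ : Equiv.Perm (Fin n), ((Equiv.Perm.sign σ : ℤ) : ℝ) *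
        ∑ i, (∏ j ∈ Finset.univ.erase i, M t0 (σ j) j) • M' (σ i) i := by
    set A := M t0 with hA
    have e1 : ∀ i, (A.adjugate * M') i i = (A.updateCol i fun k => M' k i).det := by
      intro i
      rw [← Matrix.cramer_apply, Matrix.cramer_eq_adjugate_mulVec]
      simp [Matrix.mul_apply, Matrix.mulVec, dotProduct]
    have e2 : ∀ i, (A.updateCol i fun k => M' k i).det
        = ∑ σ : Equiv.Perm (Fin n), ((Equiv.Perm.sign σ : ℤ) : ℝ) *
            (M' (σ i) i * ∏ j ∈ Finset.univ.erase i, A (σ j) j) := by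
      intro i
      rw [Matrix.det_apply']
      refine Finset.sum_congr rfl fun σ _ => ?_
      congr 1
      rw [← Finset.mul_prod_erase _ _ (Finset.mem_univ i)]
      congr 1
      · simp [Matrix.updateCol_apply]
      · refine Finset.prod_congr rfl fun j hj => ?_
        rw [Matrix.updateCol_apply, if_neg (Finset.ne_of_mem_erase hj)]
    have : (A.adjugate * M').trace = ∑ i, (A.updateCol i fun k => M' k i).det := by
      simp only [Matrix.trace, Matrix.diag]
      exact Finset.sum_congr rfl fun i _ => e1 i
    rw [this]
    calc ∑ i, (A.updateCol i fun k => M' k i).det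
        = ∑ i, ∑ σ : Equiv.Perm (Fin n), ((Equiv.Perm.sign σ : ℤ) : ℝ) *
            (M' (σ i) i * ∏ j ∈ Finset.univ.erase i, A (σ j) j) :=
          Finset.sum_congr rfl fun i _ => e2 i
      _ = _ := by
          rw [Finset.sum_comm]
          refine Finset.sum_congr rfl fun σ _ => ?_
          rw [Finset.mul_sum]
          refine Finset.sum_congr rfl fun i _ => ?_
          simp only [smul_eq_mul]
          ring
  rw [h2]
  exact h1

/-- Multivariate differentiability of a determinant. -/
theorem differentiableAt_det_aux {n : ℕ} {α : Type*} [NormedAddCommGroup α] [NormedSpace ℝ α]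
    {M : α → Matrix (Fin n) (Fin n) ℝ} {x : α}
    (h : ∀ i j, DifferentiableAt ℝ (fun a => M a i j) x) :
    DifferentiableAt ℝ (fun a => (M a).det) x := by
  classical
  simp only [Matrix.det_apply']
  exact DifferentiableAt.fun_sum fun σ _ =>
    ((HasFDerivAt.finset_prod fun i (_ : i ∈ Finset.univ) =>
      (h (σ i) i).hasFDerivAt).differentiableAt).const_mul _

theorem adjugate_eq_det_smul_inv {n : ℕ} {A : Matrix (Fin n) (Fin n) ℝ} (h : A.det ≠ 0) :
    A.adjugate = A.det • A⁻¹ := by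
  rw [Matrix.inv_def, Ring.inverse_eq_inv, smul_smul, mul_inv_cancel₀ h, one_smul]

section DiffEntries

variable {N : ℕ} {α : Type*} [NormedAddCommGroup α] [NormedSpace ℝ α]
  {W : Matrix (Fin N) (Fin N) ℝ} {lam2 : ℝ}

theorem diff_S_entry {ρf : α → ℝ} {x : α} (hρ : DifferentiableAt ℝ ρf x) (i j : Fin N) :
    DifferentiableAt ℝ (fun a => Smat W (ρf a) i j) x := by
  simp only [Smat, Matrix.sub_apply, Matrix.smul_apply, smul_eq_mul]
  exact (differentiableAt_const _).sub (hρ.mul (differentiableAt_const _))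

theorem diff_O_entry {ρf σf : α → ℝ} {x : α} (hρ : DifferentiableAt ℝ ρf x)
    (hσ : DifferentiableAt ℝ σf x) (i j : Fin N) :
    DifferentiableAt ℝ (fun a => Omat W lam2 (ρf a) (σf a) i j) x := by
  simp only [Omat, Matrix.add_apply, Matrix.smul_apply, Matrix.mul_apply,
    Matrix.transpose_apply, smul_eq_mul]
  exact (hσ.mul_const _).add
    ((DifferentiableAt.fun_sum fun k _ => (diff_S_entry hρ i k).mul (diff_S_entry hρ j k)).const_mul _)

theorem diff_detO {ρf σf : α → ℝ} {x : α} (hρ : DifferentiableAt ℝ ρf x)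
    (hσ : DifferentiableAt ℝ σf x) :
    DifferentiableAt ℝ (fun a => (Omat W lam2 (ρf a) (σf a)).det) x :=
  differentiableAt_det_aux (diff_O_entry hρ hσ)

theorem diff_invO_entry {ρf σf : α → ℝ} {x : α} (hρ : DifferentiableAt ℝ ρf x)
    (hσ : DifferentiableAt ℝ σf x) (hO : (Omat W lam2 (ρf x) (σf x)).det ≠ 0) (i j : Fin N) :
    DifferentiableAt ℝ (fun a => (Omat W lam2 (ρf a) (σf a))⁻¹ i j) x := by
  classical
  simp only [Matrix.inv_def, Ring.inverse_eq_inv, Matrix.smul_apply, smul_eq_mul]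
  refine ((diff_detO hρ hσ).inv hO).mul ?_
  simp only [Matrix.adjugate_apply]
  refine differentiableAt_det_aux fun k l => ?_
  by_cases hk : k = j
  · simp only [Matrix.updateRow_apply, hk, if_pos rfl]
    exact differentiableAt_const _
  · simp only [Matrix.updateRow_apply, if_neg hk]
    exact diff_O_entry hρ hσ k l

end DiffEntries

theorem nll_differentiableAt {N p1 p2 : ℕ} (W : Matrix (Fin N) (Fin N) ℝ) (lam2 : ℝ)
    (X : Matrix (Fin N) (Fin p1 ⊕ Fin p2) ℝ) (Ys : Fin N → ℝ)
    (θ0 : ℝ × ((Fin p1 ⊕ Fin p2) → ℝ) × ℝ)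
    (hS : (Smat W θ0.1).det ≠ 0) (hO : (Omat W lam2 θ0.1 θ0.2.2).det ≠ 0) :
    DifferentiableAt ℝ (fun θ : ℝ × ((Fin p1 ⊕ Fin p2) → ℝ) × ℝ =>
      nll W lam2 X Ys θ.1 θ.2.1 θ.2.2) θ0 := by
  classical
  have hρ : DifferentiableAt ℝ (fun θ : ℝ × ((Fin p1 ⊕ Fin p2) → ℝ) × ℝ => θ.1) θ0 :=
    differentiableAt_fst
  have hσ : DifferentiableAt ℝ (fun θ : ℝ × ((Fin p1 ⊕ Fin p2) → ℝ) × ℝ => θ.2.2) θ0 :=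
    differentiableAt_snd.snd
  have hr : ∀ i, DifferentiableAt ℝ
      (fun θ : ℝ × ((Fin p1 ⊕ Fin p2) → ℝ) × ℝ => (Smat W θ.1 *ᵥ Ys - X *ᵥ θ.2.1) i) θ0 := by
    intro i
    have h1 : DifferentiableAt ℝ
        (fun θ : ℝ × ((Fin p1 ⊕ Fin p2) → ℝ) × ℝ => ∑ k, Smat W θ.1 i k * Ys k) θ0 :=
      DifferentiableAt.fun_sum fun k _ => (diff_S_entry hρ i k).mul_const _
    have h2 : DifferentiableAt ℝ
        (fun θ : ℝ × ((Fin p1 ⊕ Fin p2) → ℝ) × ℝ => ∑ k, X i k * θ.2.1 k) θ0 := by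
      refine DifferentiableAt.fun_sum fun k _ => (differentiableAt_const _).mul ?_
      exact ((ContinuousLinearMap.proj (R := ℝ) (φ := fun _ : Fin p1 ⊕ Fin p2 => ℝ)
        k).differentiableAt).comp θ0 differentiableAt_snd.fst
    exact h1.sub h2
  have hinv := fun i j => diff_invO_entry (W := W) (lam2 := lam2) hρ hσ hO i j
  have hquad : DifferentiableAt ℝ (fun θ : ℝ × ((Fin p1 ⊕ Fin p2) → ℝ) × ℝ =>
      (Smat W θ.1 *ᵥ Ys - X *ᵥ θ.2.1) ⬝ᵥ
        ((Omat W lam2 θ.1 θ.2.2)⁻¹ *ᵥ (Smat W θ.1 *ᵥ Ys - X *ᵥ θ.2.1))) θ0 := by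
    show DifferentiableAt ℝ (fun θ : ℝ × ((Fin p1 ⊕ Fin p2) → ℝ) × ℝ =>
      ∑ i, (Smat W θ.1 *ᵥ Ys - X *ᵥ θ.2.1) i *
        ∑ j, (Omat W lam2 θ.1 θ.2.2)⁻¹ i j * (Smat W θ.1 *ᵥ Ys - X *ᵥ θ.2.1) j) θ0
    exact DifferentiableAt.fun_sum fun i _ =>
      (hr i).mul (DifferentiableAt.fun_sum fun j _ => (hinv i j).mul (hr j))
  simp only [nll]
  refine DifferentiableAt.add (DifferentiableAt.add ?_ ?_) (hquad.const_mul _)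
  · exact ((differentiableAt_det_aux (diff_S_entry hρ)).log hS).neg
  · exact ((diff_detO hρ hσ).log hO).const_mul _

/-- direction matrix `B₁` for the derivative of `Ω` -/
noncomputable def B1m {N : ℕ} (W : Matrix (Fin N) (Fin N) ℝ) (lam2 ρ0 a c : ℝ) :
    Matrix (Fin N) (Fin N) ℝ :=
  c • (1 : Matrix (Fin N) (Fin N) ℝ) - (a * lam2) • WSmat W ρ0

section LineDeriv

variable {N p1 p2 : ℕ} (W : Matrix (Fin N) (Fin N) ℝ) (lam2 : ℝ)
  (X : Matrix (Fin N) (Fin p1 ⊕ Fin p2) ℝ) (Ys : Fin N → ℝ)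
  (ρ0 : ℝ) (β0 : Fin p1 ⊕ Fin p2 → ℝ) (σ02 : ℝ) (a : ℝ) (b : Fin p1 ⊕ Fin p2 → ℝ) (c : ℝ)

theorem Smat_line (t : ℝ) : Smat W (ρ0 + t * a) = Smat W ρ0 - (t * a) • W := by
  simp only [Smat, add_smul]
  abel

theorem Omat_line (t : ℝ) : Omat W lam2 (ρ0 + t * a) (σ02 + t * c)
    = Omat W lam2 ρ0 σ02 + t • B1m W lam2 ρ0 a c + (t * t) • ((a * a * lam2) • (W * Wᵀ)) := by
  have expand : (Smat W ρ0 - (t * a) • W) * (Smat W ρ0 - (t * a) • W)ᵀ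
      = Smat W ρ0 * (Smat W ρ0)ᵀ - (t * a) • (W * (Smat W ρ0)ᵀ)
        - (t * a) • (Smat W ρ0 * Wᵀ) + ((t * a) * (t * a)) • (W * Wᵀ) := by
    simp only [Matrix.transpose_sub, Matrix.transpose_smul, Matrix.sub_mul, Matrix.mul_sub,
      smul_mul_assoc, mul_smul_comm, smul_smul]
    module
  rw [Omat, Smat_line, expand]
  simp only [Omat, B1m, WSmat, add_smul, smul_add, smul_sub, smul_smul]
  module

theorem rvec_line (t : ℝ) : Smat W (ρ0 + t * a) *ᵥ Ys - X *ᵥ (β0 + t • b)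
    = (Smat W ρ0 *ᵥ Ys - X *ᵥ β0) + t • (-(a • (W *ᵥ Ys)) - X *ᵥ b) := by
  rw [Smat_line, Matrix.sub_mulVec, Matrix.smul_mulVec, Matrix.mulVec_add,
    Matrix.mulVec_smul]
  module

theorem Omat_entry_hasDerivAt (i j : Fin N) :
    HasDerivAt (fun t => Omat W lam2 (ρ0 + t * a) (σ02 + t * c) i j)
      (B1m W lam2 ρ0 a c i j) 0 := by
  have heq : (fun t => Omat W lam2 (ρ0 + t * a) (σ02 + t * c) i j)
      = fun t => Omat W lam2 ρ0 σ02 i j + t * B1m W lam2 ρ0 a c i j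
          + (t * t) * (((a * a * lam2) • (W * Wᵀ)) i j) := by
    funext t
    rw [Omat_line W lam2 ρ0 σ02 a c t]
    simp [Matrix.add_apply, Matrix.smul_apply, smul_eq_mul]
  rw [heq]
  have h := ((hasDerivAt_const (0:ℝ) (Omat W lam2 ρ0 σ02 i j)).fun_add
    ((hasDerivAt_id (0:ℝ)).mul_const (B1m W lam2 ρ0 a c i j))).fun_add
    (((hasDerivAt_id (0:ℝ)).mul (hasDerivAt_id (0:ℝ))).mul_const (((a * a * lam2) • (W * Wᵀ)) i j))
  simpa using h

theorem Smat_entry_hasDerivAt (i j : Fin N) :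
    HasDerivAt (fun t => Smat W (ρ0 + t * a) i j) (((-a) • W : Matrix (Fin N) (Fin N) ℝ) i j) 0 := by
  have heq : (fun t => Smat W (ρ0 + t * a) i j)
      = fun t => Smat W ρ0 i j - (t * a) * W i j := by
    funext t
    rw [Smat_line W ρ0 a t]
    simp [Matrix.sub_apply, Matrix.smul_apply, smul_eq_mul]
  rw [heq]
  have h := (hasDerivAt_const (0:ℝ) (Smat W ρ0 i j)).fun_sub
    (((hasDerivAt_id (0:ℝ)).mul_const a).mul_const (W i j))
  simpa [Matrix.smul_apply, smul_eq_mul] using h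

theorem detS_line_hasDerivAt :
    HasDerivAt (fun t => (Smat W (ρ0 + t * a)).det)
      (((Smat W ρ0).adjugate * ((-a) • W)).trace) 0 := by
  have h := hasDerivAt_det_aux (M := fun t => Smat W (ρ0 + t * a))
    (M' := (-a) • W) (t0 := 0) (fun i j => Smat_entry_hasDerivAt W ρ0 a i j)
  simpa using h

theorem detO_line_hasDerivAt :
    HasDerivAt (fun t => (Omat W lam2 (ρ0 + t * a) (σ02 + t * c)).det)
      (((Omat W lam2 ρ0 σ02).adjugate * B1m W lam2 ρ0 a c).trace) 0 := by
  have h := hasDerivAt_det_aux (M := fun t => Omat W lam2 (ρ0 + t * a) (σ02 + t * c))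
    (M' := B1m W lam2 ρ0 a c) (t0 := 0) (fun i j => Omat_entry_hasDerivAt W lam2 ρ0 σ02 a c i j)
  simpa using h

theorem log_detS_hasDerivAt (hS : (Smat W ρ0).det ≠ 0) :
    HasDerivAt (fun t => -Real.log ((Smat W (ρ0 + t * a)).det))
      (a * ((Smat W ρ0)⁻¹ * W).trace) 0 := by
  have h := ((detS_line_hasDerivAt W ρ0 a).log (by simpa using hS)).fun_neg
  refine h.congr_deriv ?_
  rw [adjugate_eq_det_smul_inv hS, smul_mul_assoc, mul_smul_comm, smul_smul,
    Matrix.trace_smul, smul_eq_mul]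
  simp only [zero_mul, add_zero]
  field_simp

theorem log_detO_hasDerivAt (hO : (Omat W lam2 ρ0 σ02).det ≠ 0) :
    HasDerivAt (fun t => (1/2) * Real.log ((Omat W lam2 (ρ0 + t * a) (σ02 + t * c)).det))
      ((1/2) * ((Omat W lam2 ρ0 σ02)⁻¹ * B1m W lam2 ρ0 a c).trace) 0 := by
  have h := HasDerivAt.const_mul (1/2 : ℝ)
    ((detO_line_hasDerivAt W lam2 ρ0 σ02 a c).log (by simpa using hO))
  refine h.congr_deriv ?_
  rw [adjugate_eq_det_smul_inv hO, smul_mul_assoc, Matrix.trace_smul, smul_eq_mul]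
  simp only [zero_mul, add_zero]
  field_simp

theorem invO_line_hasDerivAt (hO : (Omat W lam2 ρ0 σ02).det ≠ 0) (i j : Fin N) :
    HasDerivAt (fun t => (Omat W lam2 (ρ0 + t * a) (σ02 + t * c))⁻¹ i j)
      ((-((Omat W lam2 ρ0 σ02)⁻¹ * B1m W lam2 ρ0 a c * (Omat W lam2 ρ0 σ02)⁻¹)) i j) 0 := by
  classical
  have hline1 : DifferentiableAt ℝ (fun t : ℝ => ρ0 + t * a) 0 :=
    (differentiableAt_id.mul_const a).const_add ρ0
  have hline2 : DifferentiableAt ℝ (fun t : ℝ => σ02 + t * c) 0 :=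
    (differentiableAt_id.mul_const c).const_add σ02
  have hO' : (Omat W lam2 (ρ0 + 0 * a) (σ02 + 0 * c)).det ≠ 0 := by simpa using hO
  have hdiff : ∀ k l, DifferentiableAt ℝ
      (fun t => (Omat W lam2 (ρ0 + t * a) (σ02 + t * c))⁻¹ k l) 0 :=
    fun k l => diff_invO_entry hline1 hline2 hO' k l
  have hgd : ∀ k l, HasDerivAt (fun t => (Omat W lam2 (ρ0 + t * a) (σ02 + t * c))⁻¹ k l)
      (deriv (fun t => (Omat W lam2 (ρ0 + t * a) (σ02 + t * c))⁻¹ k l) 0) 0 :=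
    fun k l => (hdiff k l).hasDerivAt
  set Gm : Matrix (Fin N) (Fin N) ℝ :=
    Matrix.of (fun k l => deriv (fun t => (Omat W lam2 (ρ0 + t * a) (σ02 + t * c))⁻¹ k l) 0)
    with hGmdef
  have hdetdiff : DifferentiableAt ℝ
      (fun t => (Omat W lam2 (ρ0 + t * a) (σ02 + t * c)).det) 0 :=
    differentiableAt_det_aux fun k l => diff_O_entry hline1 hline2 k l
  have hev : ∀ᶠ t in nhds (0:ℝ),
      Omat W lam2 (ρ0 + t * a) (σ02 + t * c) * (Omat W lam2 (ρ0 + t * a) (σ02 + t * c))⁻¹ = 1 := by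
    have hne : ∀ᶠ t in nhds (0:ℝ), (Omat W lam2 (ρ0 + t * a) (σ02 + t * c)).det ≠ 0 :=
      hdetdiff.continuousAt.eventually_ne hO'
    filter_upwards [hne] with t ht
    exact Matrix.mul_nonsing_inv _ (isUnit_iff_ne_zero.mpr ht)
  have hzero : B1m W lam2 ρ0 a c * (Omat W lam2 ρ0 σ02)⁻¹ + Omat W lam2 ρ0 σ02 * Gm = 0 := by
    apply Matrix.ext
    intro k l
    have hmulentry : HasDerivAt
        (fun t => (Omat W lam2 (ρ0 + t * a) (σ02 + t * c) *
          (Omat W lam2 (ρ0 + t * a) (σ02 + t * c))⁻¹) k l)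
        ((B1m W lam2 ρ0 a c * (Omat W lam2 ρ0 σ02)⁻¹ + Omat W lam2 ρ0 σ02 * Gm) k l) 0 := by
      have hrw : (fun t => (Omat W lam2 (ρ0 + t * a) (σ02 + t * c) *
          (Omat W lam2 (ρ0 + t * a) (σ02 + t * c))⁻¹) k l)
          = fun t => ∑ m, Omat W lam2 (ρ0 + t * a) (σ02 + t * c) k m *
              (Omat W lam2 (ρ0 + t * a) (σ02 + t * c))⁻¹ m l := by
        funext t; rw [Matrix.mul_apply]
      rw [hrw]
      have hsum := HasDerivAt.fun_sum (u := Finset.univ) fun m (_ : m ∈ Finset.univ) =>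
        (Omat_entry_hasDerivAt W lam2 ρ0 σ02 a c k m).mul (hgd m l)
      refine hsum.congr_deriv ?_
      simp only [hGmdef, Matrix.add_apply, Matrix.mul_apply, zero_mul, add_zero,
        Matrix.of_apply, Finset.sum_add_distrib]
    have hconst : HasDerivAt
        (fun t => (Omat W lam2 (ρ0 + t * a) (σ02 + t * c) *
          (Omat W lam2 (ρ0 + t * a) (σ02 + t * c))⁻¹) k l) 0 0 := by
      have h1 : HasDerivAt (fun _ : ℝ => (1 : Matrix (Fin N) (Fin N) ℝ) k l) 0 0 :=
        hasDerivAt_const _ _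
      refine HasDerivAt.congr_of_eventuallyEq h1 ?_
      · exact hev.mono fun t ht => by simp only [ht]
    have hu := hmulentry.unique hconst
    simpa using hu
  have hGm_eq : Gm = -((Omat W lam2 ρ0 σ02)⁻¹ * B1m W lam2 ρ0 a c * (Omat W lam2 ρ0 σ02)⁻¹) := by
    have h1 : Omat W lam2 ρ0 σ02 * Gm = -(B1m W lam2 ρ0 a c * (Omat W lam2 ρ0 σ02)⁻¹) :=
      eq_neg_of_add_eq_zero_right hzero
    calc Gm = (Omat W lam2 ρ0 σ02)⁻¹ * (Omat W lam2 ρ0 σ02 * Gm) := by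
          rw [← Matrix.mul_assoc, Matrix.nonsing_inv_mul _ (isUnit_iff_ne_zero.mpr hO),
            Matrix.one_mul]
      _ = (Omat W lam2 ρ0 σ02)⁻¹ * -(B1m W lam2 ρ0 a c * (Omat W lam2 ρ0 σ02)⁻¹) := by rw [h1]
      _ = -((Omat W lam2 ρ0 σ02)⁻¹ * B1m W lam2 ρ0 a c * (Omat W lam2 ρ0 σ02)⁻¹) := by
          rw [Matrix.mul_neg, Matrix.mul_assoc]
  rw [← hGm_eq]
  exact hgd i j

theorem quad_line_hasDerivAt (hO : (Omat W lam2 ρ0 σ02).det ≠ 0) :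
    HasDerivAt (fun t => (Smat W (ρ0 + t * a) *ᵥ Ys - X *ᵥ (β0 + t • b)) ⬝ᵥ
        ((Omat W lam2 (ρ0 + t * a) (σ02 + t * c))⁻¹ *ᵥ
          (Smat W (ρ0 + t * a) *ᵥ Ys - X *ᵥ (β0 + t • b))))
      ((-(a • (W *ᵥ Ys)) - X *ᵥ b) ⬝ᵥ ((Omat W lam2 ρ0 σ02)⁻¹ *ᵥ (Smat W ρ0 *ᵥ Ys - X *ᵥ β0))
        + (Smat W ρ0 *ᵥ Ys - X *ᵥ β0) ⬝ᵥ
            ((-((Omat W lam2 ρ0 σ02)⁻¹ * B1m W lam2 ρ0 a c * (Omat W lam2 ρ0 σ02)⁻¹)) *ᵥ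
              (Smat W ρ0 *ᵥ Ys - X *ᵥ β0))
        + (Smat W ρ0 *ᵥ Ys - X *ᵥ β0) ⬝ᵥ
            ((Omat W lam2 ρ0 σ02)⁻¹ *ᵥ (-(a • (W *ᵥ Ys)) - X *ᵥ b))) 0 := by
  classical
  have hrent : ∀ i, HasDerivAt (fun t => (Smat W (ρ0 + t * a) *ᵥ Ys - X *ᵥ (β0 + t • b)) i)
      ((-(a • (W *ᵥ Ys)) - X *ᵥ b) i) 0 := by
    intro i
    have heq : (fun t => (Smat W (ρ0 + t * a) *ᵥ Ys - X *ᵥ (β0 + t • b)) i)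
        = fun t => (Smat W ρ0 *ᵥ Ys - X *ᵥ β0) i + t * ((-(a • (W *ᵥ Ys)) - X *ᵥ b) i) := by
      funext t
      rw [rvec_line W X Ys ρ0 β0 a b t]
      simp [smul_eq_mul]
    rw [heq]
    simpa using (hasDerivAt_const (0:ℝ) ((Smat W ρ0 *ᵥ Ys - X *ᵥ β0) i)).fun_add ((hasDerivAt_id (0:ℝ)).mul_const _)
  show HasDerivAt (fun t => ∑ i, (Smat W (ρ0 + t * a) *ᵥ Ys - X *ᵥ (β0 + t • b)) i *
      ∑ j, (Omat W lam2 (ρ0 + t * a) (σ02 + t * c))⁻¹ i j *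
        (Smat W (ρ0 + t * a) *ᵥ Ys - X *ᵥ (β0 + t • b)) j) _ 0
  have hsum := HasDerivAt.fun_sum (u := Finset.univ) fun i (_ : i ∈ Finset.univ) =>
    (hrent i).mul (HasDerivAt.fun_sum (u := Finset.univ) fun j (_ : j ∈ Finset.univ) =>
      (invO_line_hasDerivAt W lam2 ρ0 σ02 a c hO i j).mul (hrent j))
  refine hsum.congr_deriv ?_
  simp only [zero_mul, add_zero, zero_smul, dotProduct, Matrix.mulVec, Pi.mul_apply,
    mul_add, Finset.sum_add_distrib, Finset.mul_sum]
  ring_nf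

theorem nll_line_hasDerivAt (hS : (Smat W ρ0).det ≠ 0) (hO : (Omat W lam2 ρ0 σ02).det ≠ 0) :
    HasDerivAt (fun t : ℝ => nll W lam2 X Ys (ρ0 + t * a) (β0 + t • b) (σ02 + t * c))
      (a * ((Smat W ρ0)⁻¹ * W).trace
        + (1/2) * ((Omat W lam2 ρ0 σ02)⁻¹ * B1m W lam2 ρ0 a c).trace
        + (1/2) * (
          (-(a • (W *ᵥ Ys)) - X *ᵥ b) ⬝ᵥ ((Omat W lam2 ρ0 σ02)⁻¹ *ᵥ (Smat W ρ0 *ᵥ Ys - X *ᵥ β0))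
          + (Smat W ρ0 *ᵥ Ys - X *ᵥ β0) ⬝ᵥ
              ((-((Omat W lam2 ρ0 σ02)⁻¹ * B1m W lam2 ρ0 a c * (Omat W lam2 ρ0 σ02)⁻¹)) *ᵥ
                (Smat W ρ0 *ᵥ Ys - X *ᵥ β0))
          + (Smat W ρ0 *ᵥ Ys - X *ᵥ β0) ⬝ᵥ
              ((Omat W lam2 ρ0 σ02)⁻¹ *ᵥ (-(a • (W *ᵥ Ys)) - X *ᵥ b)))) 0 := by
  have h := ((log_detS_hasDerivAt W ρ0 a hS).fun_add
    (log_detO_hasDerivAt W lam2 ρ0 σ02 a c hO)).fun_add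
    (HasDerivAt.const_mul (1/2 : ℝ) (quad_line_hasDerivAt W lam2 X Ys ρ0 β0 σ02 a b c hO))
  simpa only [nll] using h

end LineDeriv

/-! ### Probabilistic machinery -/

section Moments

variable {Ωs : Type*} [MeasurableSpace Ωs] {μ : Measure Ωs} [IsProbabilityMeasure μ]
variable {ι : Type*} [Fintype ι] [DecidableEq ι] {z : ι → Ωs → ℝ} {vr : ι → ℝ}

theorem integrable_z (h2 : ∀ k, MemLp (z k) 2 μ) (k : ι) : Integrable (z k) μ :=
  (h2 k).integrable one_le_two

theorem integrable_mul_z (h2 : ∀ k, MemLp (z k) 2 μ) (k l : ι) :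
    Integrable (fun ω => z k ω * z l ω) μ := by
  refine Integrable.mono'
    ((((h2 k).integrable_sq).add ((h2 l).integrable_sq)).div_const 2)
    ((h2 k).aestronglyMeasurable.mul (h2 l).aestronglyMeasurable) ?_
  filter_upwards with ω
  rw [Real.norm_eq_abs, abs_mul]
  simp only [Pi.add_apply]
  nlinarith [sq_nonneg (|z k ω| - |z l ω|), sq_abs (z k ω), sq_abs (z l ω),
    abs_nonneg (z k ω), abs_nonneg (z l ω)]

theorem quad_expand {n : ℕ} (m₁ m₂ : Fin n → ℝ) (A B : Matrix (Fin n) ι ℝ) (x : ι → ℝ) :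
    ((fun i => m₁ i + ∑ k, A i k * x k) ⬝ᵥ (fun i => m₂ i + ∑ k, B i k * x k))
      = (∑ i, m₁ i * m₂ i) + ((∑ k, (∑ i, m₁ i * B i k) * x k)
        + (∑ k, (∑ i, m₂ i * A i k) * x k)
        + ∑ k, ∑ l, (∑ i, A i k * B i l) * (x k * x l)) := by
  classical
  have e1 : ∀ i, (m₁ i + ∑ k, A i k * x k) * (m₂ i + ∑ k, B i k * x k)
      = m₁ i * m₂ i + ((∑ k, m₁ i * (B i k * x k)) + (∑ k, m₂ i * (A i k * x k))
        + ∑ k, ∑ l, (A i k * B i l) * (x k * x l)) := by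
    intro i
    have e2 : (∑ k, A i k * x k) * (∑ l, B i l * x l)
        = ∑ k, ∑ l, (A i k * B i l) * (x k * x l) := by
      rw [Finset.sum_mul_sum]
      exact Finset.sum_congr rfl fun k _ => Finset.sum_congr rfl fun l _ => by ring
    calc (m₁ i + ∑ k, A i k * x k) * (m₂ i + ∑ k, B i k * x k)
        = m₁ i * m₂ i + ((m₁ i * ∑ k, B i k * x k) + (m₂ i * ∑ k, A i k * x k)
            + (∑ k, A i k * x k) * (∑ l, B i l * x l)) := by ring
      _ = _ := by rw [e2, Finset.mul_sum, Finset.mul_sum]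
  calc ((fun i => m₁ i + ∑ k, A i k * x k) ⬝ᵥ (fun i => m₂ i + ∑ k, B i k * x k))
      = ∑ i, (m₁ i * m₂ i + ((∑ k, m₁ i * (B i k * x k)) + (∑ k, m₂ i * (A i k * x k))
          + ∑ k, ∑ l, (A i k * B i l) * (x k * x l))) :=
        Finset.sum_congr rfl fun i _ => e1 i
    _ = (∑ i, m₁ i * m₂ i) + ((∑ i, ∑ k, m₁ i * (B i k * x k))
          + (∑ i, ∑ k, m₂ i * (A i k * x k))
          + ∑ i, ∑ k, ∑ l, (A i k * B i l) * (x k * x l)) := by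
        rw [Finset.sum_add_distrib, Finset.sum_add_distrib, Finset.sum_add_distrib]
    _ = _ := by
        have t1 : (∑ i, ∑ k, m₁ i * (B i k * x k)) = ∑ k, (∑ i, m₁ i * B i k) * x k := by
          rw [Finset.sum_comm]
          refine Finset.sum_congr rfl fun k _ => ?_
          rw [Finset.sum_mul]
          exact Finset.sum_congr rfl fun i _ => by ring
        have t2 : (∑ i, ∑ k, m₂ i * (A i k * x k)) = ∑ k, (∑ i, m₂ i * A i k) * x k := by
          rw [Finset.sum_comm]
          refine Finset.sum_congr rfl fun k _ => ?_
          rw [Finset.sum_mul]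
          exact Finset.sum_congr rfl fun i _ => by ring
        have t3 : (∑ i, ∑ k, ∑ l, (A i k * B i l) * (x k * x l))
            = ∑ k, ∑ l, (∑ i, A i k * B i l) * (x k * x l) := by
          rw [Finset.sum_comm]
          refine Finset.sum_congr rfl fun k _ => ?_
          rw [Finset.sum_comm]
          refine Finset.sum_congr rfl fun l _ => ?_
          rw [Finset.sum_mul]
        rw [t1, t2, t3]

theorem integrable_quad (h2 : ∀ k, MemLp (z k) 2 μ) {n : ℕ}
    (m₁ m₂ : Fin n → ℝ) (A B : Matrix (Fin n) ι ℝ) :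
    Integrable (fun ω =>
      ((fun i => m₁ i + ∑ k, A i k * z k ω) ⬝ᵥ (fun i => m₂ i + ∑ k, B i k * z k ω))) μ := by
  simp only [quad_expand]
  refine (integrable_const _).add ((Integrable.add ?_ ?_).add ?_)
  · exact integrable_finset_sum _ fun k _ => (integrable_z h2 k).const_mul _
  · exact integrable_finset_sum _ fun k _ => (integrable_z h2 k).const_mul _
  · exact integrable_finset_sum _ fun k _ => integrable_finset_sum _ fun l _ =>
      (integrable_mul_z h2 k l).const_mul _

theorem integral_quad (h2 : ∀ k, MemLp (z k) 2 μ)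
    (hmean : ∀ k, ∫ ω, z k ω ∂μ = 0)
    (hcov : ∀ k l, k ≠ l → ∫ ω, z k ω * z l ω ∂μ = 0)
    (hvar : ∀ k, ∫ ω, (z k ω) ^ 2 ∂μ = vr k) {n : ℕ}
    (m₁ m₂ : Fin n → ℝ) (A B : Matrix (Fin n) ι ℝ) :
    ∫ ω, ((fun i => m₁ i + ∑ k, A i k * z k ω) ⬝ᵥ (fun i => m₂ i + ∑ k, B i k * z k ω)) ∂μ
      = (∑ i, m₁ i * m₂ i) + ∑ k, (∑ i, A i k * B i k) * vr k := by
  have hzz : ∀ k l, ∫ ω, z k ω * z l ω ∂μ = if k = l then vr k else 0 := by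
    intro k l
    by_cases hkl : k = l
    · subst hkl
      rw [if_pos rfl, ← hvar k]
      simp only [pow_two]
    · rw [if_neg hkl]
      exact hcov k l hkl
  have I1 : Integrable (fun ω => ∑ k, (∑ i, m₁ i * B i k) * z k ω) μ :=
    integrable_finset_sum _ fun k _ => (integrable_z h2 k).const_mul _
  have I2 : Integrable (fun ω => ∑ k, (∑ i, m₂ i * A i k) * z k ω) μ :=
    integrable_finset_sum _ fun k _ => (integrable_z h2 k).const_mul _
  have I3 : Integrable (fun ω => ∑ k, ∑ l, (∑ i, A i k * B i l) * (z k ω * z l ω)) μ :=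
    integrable_finset_sum _ fun k _ => integrable_finset_sum _ fun l _ =>
      (integrable_mul_z h2 k l).const_mul _
  have I12 : Integrable (fun ω => ∑ k, (∑ i, m₁ i * B i k) * z k ω
      + ∑ k, (∑ i, m₂ i * A i k) * z k ω) μ := I1.add I2
  have I123 : Integrable (fun ω => (∑ k, (∑ i, m₁ i * B i k) * z k ω
      + ∑ k, (∑ i, m₂ i * A i k) * z k ω)
      + ∑ k, ∑ l, (∑ i, A i k * B i l) * (z k ω * z l ω)) μ := I12.add I3
  simp only [quad_expand]
  rw [integral_add (integrable_const _) I123, integral_add I12 I3, integral_add I1 I2]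
  rw [integral_finset_sum _ fun k _ => (integrable_z h2 k).const_mul _,
      integral_finset_sum _ fun k _ => (integrable_z h2 k).const_mul _,
      integral_finset_sum _ fun k _ => integrable_finset_sum _ fun l _ =>
        (integrable_mul_z h2 k l).const_mul _]
  simp only [integral_const_mul, hmean, mul_zero, Finset.sum_const_zero, add_zero, zero_add]
  rw [integral_const]
  simp only [measure_univ, ENNReal.toReal_one, probReal_univ, smul_eq_mul, one_mul]
  congr 1
  refine Finset.sum_congr rfl fun k _ => ?_
  rw [integral_finset_sum _ fun l _ => (integrable_mul_z h2 k l).const_mul _]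
  simp only [integral_const_mul, hzz]
  rw [Finset.sum_eq_single k]
  · rw [if_pos rfl]
  · intro l _ hlk
    rw [if_neg (Ne.symm hlk), mul_zero]
  · intro hk
    exact absurd (Finset.mem_univ k) hk

end Moments

/-- `Ω(ρ,σ²)` is positive definite when `σ² > 0, λ² ≥ 0`. -/
theorem Omat_posDef {N : ℕ} (W : Matrix (Fin N) (Fin N) ℝ) {lam2 : ℝ} (ρ0 : ℝ) {σ02 : ℝ}
    (hσ : 0 < σ02) (hlam : 0 ≤ lam2) : (Omat W lam2 ρ0 σ02).PosDef := by
  refine Matrix.PosDef.of_dotProduct_mulVec_pos ?_ ?_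
  · show (Omat W lam2 ρ0 σ02)ᴴ = _
    apply Matrix.ext
    intro i j
    simp only [Omat, Matrix.conjTranspose_apply, Matrix.add_apply, Matrix.smul_apply,
      Matrix.one_apply, Matrix.mul_apply, Matrix.transpose_apply, star_trivial, smul_eq_mul]
    congr 1
    · simp [eq_comm]
    · congr 1
      exact Finset.sum_congr rfl fun k _ => by ring
  · intro x hx
    have hsx : star x = x := by
      funext i; simp
    rw [hsx]
    have hexp : (Omat W lam2 ρ0 σ02) *ᵥ x
        = σ02 • x + lam2 • (Smat W ρ0 *ᵥ ((Smat W ρ0)ᵀ *ᵥ x)) := by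
      rw [Omat, Matrix.add_mulVec, Matrix.smul_mulVec, Matrix.smul_mulVec,
        Matrix.one_mulVec, Matrix.mulVec_mulVec]
    rw [hexp, dotProduct_add, dotProduct_smul, dotProduct_smul]
    have h1 : (0:ℝ) < x ⬝ᵥ x := by
      obtain ⟨i0, hi0⟩ := Function.ne_iff.mp hx
      refine Finset.sum_pos' (fun i _ => mul_self_nonneg _) ⟨i0, Finset.mem_univ _, ?_⟩
      exact mul_self_pos.mpr hi0
    have h2 : (0:ℝ) ≤ x ⬝ᵥ (Smat W ρ0 *ᵥ ((Smat W ρ0)ᵀ *ᵥ x)) := by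
      rw [dotProduct_mulVec, ← Matrix.mulVec_transpose]
      exact Finset.sum_nonneg fun i _ => mul_self_nonneg _
    have hl2 : (0:ℝ) ≤ lam2 • (x ⬝ᵥ (Smat W ρ0 *ᵥ ((Smat W ρ0)ᵀ *ᵥ x))) :=
      smul_nonneg hlam h2
    have hs2 : (0:ℝ) < σ02 • (x ⬝ᵥ x) := smul_pos hσ h1
    linarith

section Bilin

variable {Ωs : Type*} [MeasurableSpace Ωs] {μ : Measure Ωs} [IsProbabilityMeasure μ]
  {N : ℕ} {E ε : Ωs → Fin N → ℝ} {σ02 lam2 : ℝ}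

theorem integrable_bilin
    (hE2 : ∀ i, MemLp (fun ω => E ω i) 2 μ) (hε2 : ∀ i, MemLp (fun ω => ε ω i) 2 μ)
    (m₁ m₂ : Fin N → ℝ) (P₁ P₂ Q₁ Q₂ : Matrix (Fin N) (Fin N) ℝ) :
    Integrable (fun ω => (m₁ + P₁ *ᵥ E ω + P₂ *ᵥ ε ω) ⬝ᵥ (m₂ + Q₁ *ᵥ E ω + Q₂ *ᵥ ε ω)) μ := by
  classical
  set z : (Fin N ⊕ Fin N) → Ωs → ℝ :=
    fun k => Sum.elim (fun i ω => E ω i) (fun i ω => ε ω i) k with hz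
  have h2 : ∀ k, MemLp (z k) 2 μ := by
    intro k; cases k with
    | inl i => exact hE2 i
    | inr i => exact hε2 i
  have hcanon : ∀ (m : Fin N → ℝ) (P Q : Matrix (Fin N) (Fin N) ℝ) (ω : Ωs),
      (m + P *ᵥ E ω + Q *ᵥ ε ω)
        = fun i => m i + ∑ k, (Matrix.of fun i' => Sum.elim (P i') (Q i')) i k * z k ω := by
    intro m P Q ω
    funext i
    simp only [Pi.add_apply, Matrix.of_apply, Fintype.sum_sum_type, Sum.elim_inl, Sum.elim_inr, hz]
    simp [Matrix.mulVec, dotProduct, add_assoc]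
  have := integrable_quad (μ := μ) h2 m₁ m₂
    (Matrix.of fun i' => Sum.elim (P₁ i') (P₂ i')) (Matrix.of fun i' => Sum.elim (Q₁ i') (Q₂ i'))
  convert this using 2 with ω
  rw [hcanon m₁ P₁ P₂ ω, hcanon m₂ Q₁ Q₂ ω]

theorem integral_bilin
    (hE2 : ∀ i, MemLp (fun ω => E ω i) 2 μ) (hε2 : ∀ i, MemLp (fun ω => ε ω i) 2 μ)
    (hEmean : ∀ i, ∫ ω, E ω i ∂μ = 0) (hεmean : ∀ i, ∫ ω, ε ω i ∂μ = 0)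
    (hEvar : ∀ i, ∫ ω, (E ω i)^2 ∂μ = σ02) (hεvar : ∀ i, ∫ ω, (ε ω i)^2 ∂μ = lam2)
    (hEEcov : ∀ i j, i ≠ j → ∫ ω, E ω i * E ω j ∂μ = 0)
    (hεεcov : ∀ i j, i ≠ j → ∫ ω, ε ω i * ε ω j ∂μ = 0)
    (hEεcov : ∀ i j, ∫ ω, E ω i * ε ω j ∂μ = 0)
    (m₁ m₂ : Fin N → ℝ) (P₁ P₂ Q₁ Q₂ : Matrix (Fin N) (Fin N) ℝ) :
    ∫ ω, (m₁ + P₁ *ᵥ E ω + P₂ *ᵥ ε ω) ⬝ᵥ (m₂ + Q₁ *ᵥ E ω + Q₂ *ᵥ ε ω) ∂μ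
      = m₁ ⬝ᵥ m₂ + (σ02 * (P₁ᵀ * Q₁).trace + lam2 * (P₂ᵀ * Q₂).trace) := by
  classical
  set z : (Fin N ⊕ Fin N) → Ωs → ℝ :=
    fun k => Sum.elim (fun i ω => E ω i) (fun i ω => ε ω i) k with hz
  have h2 : ∀ k, MemLp (z k) 2 μ := by
    intro k; cases k with
    | inl i => exact hE2 i
    | inr i => exact hε2 i
  have hmean : ∀ k, ∫ ω, z k ω ∂μ = 0 := by
    intro k; cases k with
    | inl i => exact hEmean i
    | inr i => exact hεmean i
  have hcov : ∀ k l, k ≠ l → ∫ ω, z k ω * z l ω ∂μ = 0 := by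
    intro k l hkl
    cases k with
    | inl i => cases l with
      | inl j => exact hEEcov i j (fun h => hkl (by rw [h]))
      | inr j => exact hEεcov i j
    | inr i => cases l with
      | inl j =>
        have := hEεcov j i
        rw [← this]
        exact integral_congr_ae (Filter.Eventually.of_forall fun ω => by
          simp only [hz, Sum.elim_inl, Sum.elim_inr]; ring)
      | inr j => exact hεεcov i j (fun h => hkl (by rw [h]))
  have hvar : ∀ k, ∫ ω, (z k ω)^2 ∂μ
      = (Sum.elim (fun _ : Fin N => σ02) (fun _ : Fin N => lam2)) k := by
    intro k; cases k with
    | inl i => exact hEvar i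
    | inr i => exact hεvar i
  have hcanon : ∀ (m : Fin N → ℝ) (P Q : Matrix (Fin N) (Fin N) ℝ) (ω : Ωs),
      (m + P *ᵥ E ω + Q *ᵥ ε ω)
        = fun i => m i + ∑ k, (Matrix.of fun i' => Sum.elim (P i') (Q i')) i k * z k ω := by
    intro m P Q ω
    funext i
    simp only [Pi.add_apply, Matrix.of_apply, Fintype.sum_sum_type, Sum.elim_inl, Sum.elim_inr, hz]
    simp [Matrix.mulVec, dotProduct, add_assoc]
  have hmain := integral_quad (μ := μ) h2 hmean hcov hvar m₁ m₂
    (Matrix.of fun i' => Sum.elim (P₁ i') (P₂ i')) (Matrix.of fun i' => Sum.elim (Q₁ i') (Q₂ i'))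
  have hleft : ∫ ω, (m₁ + P₁ *ᵥ E ω + P₂ *ᵥ ε ω) ⬝ᵥ (m₂ + Q₁ *ᵥ E ω + Q₂ *ᵥ ε ω) ∂μ
      = ∫ ω, ((fun i => m₁ i + ∑ k, (Matrix.of fun i' => Sum.elim (P₁ i') (P₂ i')) i k * z k ω) ⬝ᵥ
          (fun i => m₂ i + ∑ k, (Matrix.of fun i' => Sum.elim (Q₁ i') (Q₂ i')) i k * z k ω)) ∂μ := by
    congr 1
    funext ω
    rw [hcanon m₁ P₁ P₂ ω, hcanon m₂ Q₁ Q₂ ω]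
  rw [hleft, hmain]
  congr 1
  rw [Fintype.sum_sum_type]
  simp only [Matrix.of_apply, Sum.elim_inl, Sum.elim_inr]
  have ht1 : (P₁ᵀ * Q₁).trace = ∑ j, ∑ i, P₁ i j * Q₁ i j := by
    simp [Matrix.trace, Matrix.diag, Matrix.mul_apply, Matrix.transpose_apply]
  have ht2 : (P₂ᵀ * Q₂).trace = ∑ j, ∑ i, P₂ i j * Q₂ i j := by
    simp [Matrix.trace, Matrix.diag, Matrix.mul_apply, Matrix.transpose_apply]
  rw [ht1, ht2, Finset.mul_sum, Finset.mul_sum]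
  congr 1
  · exact Finset.sum_congr rfl fun j _ => by ring
  · exact Finset.sum_congr rfl fun j _ => by ring

end Bilin

/-! ### Trace identities -/

section TraceIds

variable {N : ℕ} (W : Matrix (Fin N) (Fin N) ℝ) (lam2 ρ0 σ02 : ℝ)

theorem key1 (hS : IsUnit (Smat W ρ0).det) :
    Omat W lam2 ρ0 σ02 * ((Smat W ρ0)⁻¹)ᵀ
      = σ02 • ((Smat W ρ0)⁻¹)ᵀ + lam2 • Smat W ρ0 := by
  rw [Omat, Matrix.add_mul, smul_mul_assoc, smul_mul_assoc, Matrix.one_mul,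
    Matrix.mul_assoc, ← Matrix.transpose_mul, Matrix.nonsing_inv_mul _ hS,
    Matrix.transpose_one, Matrix.mul_one]

theorem key2 (hS : IsUnit (Smat W ρ0).det) :
    (Smat W ρ0)⁻¹ * Omat W lam2 ρ0 σ02 = σ02 • (Smat W ρ0)⁻¹ + lam2 • (Smat W ρ0)ᵀ := by
  rw [Omat, Matrix.mul_add, mul_smul_comm, mul_smul_comm, Matrix.mul_one, ← Matrix.mul_assoc,
    Matrix.nonsing_inv_mul _ hS, Matrix.one_mul]

theorem idT1core (hS : IsUnit (Smat W ρ0).det) (hO : IsUnit (Omat W lam2 ρ0 σ02).det) :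
    σ02 * ((W * (Smat W ρ0)⁻¹)ᵀ * (Omat W lam2 ρ0 σ02)⁻¹).trace
      + lam2 * (Wᵀ * ((Omat W lam2 ρ0 σ02)⁻¹ * Smat W ρ0)).trace
      = ((Smat W ρ0)⁻¹ * W).trace := by
  have c1 : ((W * (Smat W ρ0)⁻¹)ᵀ * (Omat W lam2 ρ0 σ02)⁻¹).trace
      = (Wᵀ * ((Omat W lam2 ρ0 σ02)⁻¹ * ((Smat W ρ0)⁻¹)ᵀ)).trace := by
    rw [Matrix.transpose_mul, Matrix.mul_assoc, Matrix.trace_mul_comm, Matrix.mul_assoc]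
  rw [c1]
  have heq : σ02 * (Wᵀ * ((Omat W lam2 ρ0 σ02)⁻¹ * ((Smat W ρ0)⁻¹)ᵀ)).trace
      + lam2 * (Wᵀ * ((Omat W lam2 ρ0 σ02)⁻¹ * Smat W ρ0)).trace
      = (Wᵀ * ((Omat W lam2 ρ0 σ02)⁻¹ * (σ02 • ((Smat W ρ0)⁻¹)ᵀ + lam2 • Smat W ρ0))).trace := by
    rw [Matrix.mul_add, mul_smul_comm, mul_smul_comm, Matrix.mul_add, mul_smul_comm,
      mul_smul_comm, Matrix.trace_add, Matrix.trace_smul, Matrix.trace_smul,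
      smul_eq_mul, smul_eq_mul]
  rw [heq, ← key1 W lam2 ρ0 σ02 hS,
    ← Matrix.mul_assoc ((Omat W lam2 ρ0 σ02)⁻¹) (Omat W lam2 ρ0 σ02),
    Matrix.nonsing_inv_mul _ hO, Matrix.one_mul, ← Matrix.transpose_mul, Matrix.trace_transpose]

theorem idT2core (hS : IsUnit (Smat W ρ0).det) (hO : IsUnit (Omat W lam2 ρ0 σ02).det) :
    σ02 * ((Omat W lam2 ρ0 σ02)⁻¹ * (W * (Smat W ρ0)⁻¹)).trace
      + lam2 * ((Smat W ρ0)ᵀ * ((Omat W lam2 ρ0 σ02)⁻¹ * W)).trace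
      = ((Smat W ρ0)⁻¹ * W).trace := by
  have c1 : ((Omat W lam2 ρ0 σ02)⁻¹ * (W * (Smat W ρ0)⁻¹)).trace
      = ((Smat W ρ0)⁻¹ * ((Omat W lam2 ρ0 σ02)⁻¹ * W)).trace := by
    rw [← Matrix.mul_assoc, Matrix.trace_mul_comm]
  rw [c1]
  have heq : σ02 * ((Smat W ρ0)⁻¹ * ((Omat W lam2 ρ0 σ02)⁻¹ * W)).trace
      + lam2 * ((Smat W ρ0)ᵀ * ((Omat W lam2 ρ0 σ02)⁻¹ * W)).trace
      = ((σ02 • (Smat W ρ0)⁻¹ + lam2 • (Smat W ρ0)ᵀ) * ((Omat W lam2 ρ0 σ02)⁻¹ * W)).trace := by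
    rw [Matrix.add_mul, smul_mul_assoc, smul_mul_assoc, Matrix.trace_add, Matrix.trace_smul,
      Matrix.trace_smul, smul_eq_mul, smul_eq_mul]
  rw [heq, ← key2 W lam2 ρ0 σ02 hS, Matrix.mul_assoc, ← Matrix.mul_assoc (Omat W lam2 ρ0 σ02),
    Matrix.mul_nonsing_inv _ hO, Matrix.one_mul]

theorem idT3core (B1 : Matrix (Fin N) (Fin N) ℝ) (hO : IsUnit (Omat W lam2 ρ0 σ02).det) :
    σ02 * ((1 : Matrix (Fin N) (Fin N) ℝ)ᵀ *
        (-((Omat W lam2 ρ0 σ02)⁻¹ * B1 * (Omat W lam2 ρ0 σ02)⁻¹))).trace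
      + lam2 * ((Smat W ρ0)ᵀ *
        ((-((Omat W lam2 ρ0 σ02)⁻¹ * B1 * (Omat W lam2 ρ0 σ02)⁻¹)) * Smat W ρ0)).trace
      = -(((Omat W lam2 ρ0 σ02)⁻¹ * B1).trace) := by
  have c2 : ((Smat W ρ0)ᵀ *
      ((-((Omat W lam2 ρ0 σ02)⁻¹ * B1 * (Omat W lam2 ρ0 σ02)⁻¹)) * Smat W ρ0)).trace
      = ((-((Omat W lam2 ρ0 σ02)⁻¹ * B1 * (Omat W lam2 ρ0 σ02)⁻¹))
          * (Smat W ρ0 * (Smat W ρ0)ᵀ)).trace := by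
    rw [Matrix.trace_mul_comm, Matrix.mul_assoc]
  rw [Matrix.transpose_one, Matrix.one_mul, c2]
  have heq : σ02 * (-((Omat W lam2 ρ0 σ02)⁻¹ * B1 * (Omat W lam2 ρ0 σ02)⁻¹)).trace
      + lam2 * ((-((Omat W lam2 ρ0 σ02)⁻¹ * B1 * (Omat W lam2 ρ0 σ02)⁻¹))
          * (Smat W ρ0 * (Smat W ρ0)ᵀ)).trace
      = ((-((Omat W lam2 ρ0 σ02)⁻¹ * B1 * (Omat W lam2 ρ0 σ02)⁻¹)) * Omat W lam2 ρ0 σ02).trace := by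
    rw [Omat, Matrix.mul_add, mul_smul_comm, Matrix.mul_one, mul_smul_comm,
      Matrix.trace_add, Matrix.trace_smul, Matrix.trace_smul, smul_eq_mul, smul_eq_mul]
  rw [heq, Matrix.neg_mul, Matrix.trace_neg, Matrix.mul_assoc ((Omat W lam2 ρ0 σ02)⁻¹ * B1),
    Matrix.nonsing_inv_mul _ hO, Matrix.mul_one]

end TraceIds

theorem statement_0
    {Ωs : Type*} [MeasurableSpace Ωs] (μ : Measure Ωs) [IsProbabilityMeasure μ]
    (N p1 p2 : ℕ) (hN : 0 < N) (hp1 : 0 < p1) (hp2 : 0 < p2)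
    (W : Matrix (Fin N) (Fin N) ℝ) (hW : ∀ i, W i i = 0)
    (X : Matrix (Fin N) (Fin p1 ⊕ Fin p2) ℝ)
    (ρ0 : ℝ) (β0 : Fin p1 ⊕ Fin p2 → ℝ) (σ02 lam2 lamx2 : ℝ)
    (hσ : 0 < σ02) (hlam : 0 < lam2) (hlamx : 0 < lamx2)
    (hS0 : 0 < (Smat W ρ0).det)
    (E ε : Ωs → Fin N → ℝ) (Ex : Ωs → Fin N → Fin p2 → ℝ)
    (hindep : iIndepFun (noiseFam E ε Ex) μ)
    (hmom : ∀ z, MemLp (noiseFam E ε Ex z) 4 μ)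
    (hmean : ∀ z, ∫ ω, noiseFam E ε Ex z ω ∂μ = 0)
    (hEvar : ∀ i, ∫ ω, (E ω i) ^ 2 ∂μ = σ02)
    (hepsvar : ∀ i, ∫ ω, (ε ω i) ^ 2 ∂μ = lam2)
    (hExvar : ∀ i j, ∫ ω, (Ex ω i j) ^ 2 ∂μ = lamx2) :
    (∀ ω, DifferentiableAt ℝ
        (fun θ : ℝ × ((Fin p1 ⊕ Fin p2) → ℝ) × ℝ =>
          nll W lam2 X (Yobs W ρ0 X β0 (E ω) (ε ω)) θ.1 θ.2.1 θ.2.2) (ρ0, β0, σ02)) ∧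
      ∀ v : ℝ × ((Fin p1 ⊕ Fin p2) → ℝ) × ℝ,
        ∫ ω, fderiv ℝ
            (fun θ : ℝ × ((Fin p1 ⊕ Fin p2) → ℝ) × ℝ =>
              nll W lam2 X (Yobs W ρ0 X β0 (E ω) (ε ω)) θ.1 θ.2.1 θ.2.2) (ρ0, β0, σ02) v ∂μ = 0
  := by
  classical
  have hSdet : (Smat W ρ0).det ≠ 0 := ne_of_gt hS0
  have hSu : IsUnit (Smat W ρ0).det := isUnit_iff_ne_zero.mpr hSdet
  have hOpd : (Omat W lam2 ρ0 σ02).PosDef := Omat_posDef W ρ0 hσ (le_of_lt hlam)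
  have hOdet : (Omat W lam2 ρ0 σ02).det ≠ 0 := ne_of_gt hOpd.det_pos
  have hOu : IsUnit (Omat W lam2 ρ0 σ02).det := isUnit_iff_ne_zero.mpr hOdet
  have hE2 : ∀ i, MemLp (fun ω => E ω i) 2 μ := fun i =>
    (hmom (Sum.inl i)).mono_exponent (by norm_num)
  have hε2 : ∀ i, MemLp (fun ω => ε ω i) 2 μ := fun i =>
    (hmom (Sum.inr (Sum.inl i))).mono_exponent (by norm_num)
  have hE1i : ∀ i, Integrable (fun ω => E ω i) μ := fun i => (hE2 i).integrable one_le_two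
  have hε1i : ∀ i, Integrable (fun ω => ε ω i) μ := fun i => (hε2 i).integrable one_le_two
  have hEmean : ∀ i, ∫ ω, E ω i ∂μ = 0 := fun i => hmean (Sum.inl i)
  have hεmean : ∀ i, ∫ ω, ε ω i ∂μ = 0 := fun i => hmean (Sum.inr (Sum.inl i))
  have hEEcov : ∀ i j, i ≠ j → ∫ ω, E ω i * E ω j ∂μ = 0 := by
    intro i j hij
    have hind : IndepFun (noiseFam E ε Ex (Sum.inl i)) (noiseFam E ε Ex (Sum.inl j)) μ :=
      hindep.indepFun (by simpa using hij)
    have h := hind.integral_mul_eq_mul_integral (hE1i i).aestronglyMeasurable (hE1i j).aestronglyMeasurable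
    calc ∫ ω, E ω i * E ω j ∂μ
        = (∫ ω, E ω i ∂μ) * ∫ ω, E ω j ∂μ := h
      _ = 0 := by rw [hEmean i, zero_mul]
  have hεεcov : ∀ i j, i ≠ j → ∫ ω, ε ω i * ε ω j ∂μ = 0 := by
    intro i j hij
    have hind : IndepFun (noiseFam E ε Ex (Sum.inr (Sum.inl i)))
        (noiseFam E ε Ex (Sum.inr (Sum.inl j))) μ :=
      hindep.indepFun (by simpa using hij)
    have h := hind.integral_mul_eq_mul_integral (hε1i i).aestronglyMeasurable (hε1i j).aestronglyMeasurable
    calc ∫ ω, ε ω i * ε ω j ∂μ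
        = (∫ ω, ε ω i ∂μ) * ∫ ω, ε ω j ∂μ := h
      _ = 0 := by rw [hεmean i, zero_mul]
  have hEεcov : ∀ i j, ∫ ω, E ω i * ε ω j ∂μ = 0 := by
    intro i j
    have hind : IndepFun (noiseFam E ε Ex (Sum.inl i))
        (noiseFam E ε Ex (Sum.inr (Sum.inl j))) μ :=
      hindep.indepFun (by simp)
    have h := hind.integral_mul_eq_mul_integral (hE1i i).aestronglyMeasurable (hε1i j).aestronglyMeasurable
    calc ∫ ω, E ω i * ε ω j ∂μ
        = (∫ ω, E ω i ∂μ) * ∫ ω, ε ω j ∂μ := h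
      _ = 0 := by rw [hEmean i, zero_mul]
  have hdiff : ∀ ω, DifferentiableAt ℝ (fun θ : ℝ × ((Fin p1 ⊕ Fin p2) → ℝ) × ℝ =>
      nll W lam2 X (Yobs W ρ0 X β0 (E ω) (ε ω)) θ.1 θ.2.1 θ.2.2) (ρ0, β0, σ02) := fun ω =>
    nll_differentiableAt W lam2 X _ (ρ0, β0, σ02) hSdet hOdet
  refine ⟨hdiff, fun v => ?_⟩
  -- decompositions of the random vectors
  have hr0d : ∀ e eps : Fin N → ℝ, Smat W ρ0 *ᵥ Yobs W ρ0 X β0 e eps - X *ᵥ β0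
      = (0 : Fin N → ℝ) + 1 *ᵥ e + Smat W ρ0 *ᵥ eps := by
    intro e eps
    simp only [Yobs, Matrix.mulVec_add, Matrix.mulVec_mulVec, ← Matrix.mul_assoc,
      Matrix.mul_nonsing_inv _ hSu, Matrix.one_mul, Matrix.one_mulVec]
    module
  have hrdd : ∀ e eps : Fin N → ℝ, -(v.1 • (W *ᵥ Yobs W ρ0 X β0 e eps)) - X *ᵥ v.2.1
      = (-(v.1 • ((W * (Smat W ρ0)⁻¹ * X) *ᵥ β0)) - X *ᵥ v.2.1)
        + ((-v.1) • (W * (Smat W ρ0)⁻¹)) *ᵥ e + ((-v.1) • W) *ᵥ eps := by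
    intro e eps
    simp only [Yobs, Matrix.mulVec_add, Matrix.mulVec_mulVec, ← Matrix.mul_assoc,
      Matrix.smul_mulVec]
    module
  have hOr0d : ∀ e eps : Fin N → ℝ,
      (Omat W lam2 ρ0 σ02)⁻¹ *ᵥ (Smat W ρ0 *ᵥ Yobs W ρ0 X β0 e eps - X *ᵥ β0)
      = (0 : Fin N → ℝ) + (Omat W lam2 ρ0 σ02)⁻¹ *ᵥ e
        + ((Omat W lam2 ρ0 σ02)⁻¹ * Smat W ρ0) *ᵥ eps := by
    intro e eps
    rw [hr0d e eps]
    simp only [Matrix.mulVec_add, Matrix.mulVec_mulVec, Matrix.mulVec_zero, Matrix.mul_one]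
  have hGr0d : ∀ e eps : Fin N → ℝ,
      (-((Omat W lam2 ρ0 σ02)⁻¹ * B1m W lam2 ρ0 v.1 v.2.2 * (Omat W lam2 ρ0 σ02)⁻¹)) *ᵥ
        (Smat W ρ0 *ᵥ Yobs W ρ0 X β0 e eps - X *ᵥ β0)
      = (0 : Fin N → ℝ)
        + (-((Omat W lam2 ρ0 σ02)⁻¹ * B1m W lam2 ρ0 v.1 v.2.2 * (Omat W lam2 ρ0 σ02)⁻¹)) *ᵥ e
        + ((-((Omat W lam2 ρ0 σ02)⁻¹ * B1m W lam2 ρ0 v.1 v.2.2 * (Omat W lam2 ρ0 σ02)⁻¹))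
            * Smat W ρ0) *ᵥ eps := by
    intro e eps
    rw [hr0d e eps]
    simp only [Matrix.mulVec_add, Matrix.mulVec_mulVec, Matrix.mulVec_zero, Matrix.mul_one]
  have hOrdd : ∀ e eps : Fin N → ℝ,
      (Omat W lam2 ρ0 σ02)⁻¹ *ᵥ (-(v.1 • (W *ᵥ Yobs W ρ0 X β0 e eps)) - X *ᵥ v.2.1)
      = ((Omat W lam2 ρ0 σ02)⁻¹ *ᵥ (-(v.1 • ((W * (Smat W ρ0)⁻¹ * X) *ᵥ β0)) - X *ᵥ v.2.1))
        + ((-v.1) • ((Omat W lam2 ρ0 σ02)⁻¹ * (W * (Smat W ρ0)⁻¹))) *ᵥ e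
        + ((-v.1) • ((Omat W lam2 ρ0 σ02)⁻¹ * W)) *ᵥ eps := by
    intro e eps
    rw [hrdd e eps]
    simp only [Matrix.mulVec_add, Matrix.mulVec_mulVec, mul_smul_comm]
  -- pointwise identification of the derivative
  have hfd : ∀ ω, fderiv ℝ (fun θ : ℝ × ((Fin p1 ⊕ Fin p2) → ℝ) × ℝ =>
      nll W lam2 X (Yobs W ρ0 X β0 (E ω) (ε ω)) θ.1 θ.2.1 θ.2.2) (ρ0, β0, σ02) v
      = v.1 * ((Smat W ρ0)⁻¹ * W).trace
        + (1/2) * ((Omat W lam2 ρ0 σ02)⁻¹ * B1m W lam2 ρ0 v.1 v.2.2).trace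
        + (1/2) * (
          ((-(v.1 • ((W * (Smat W ρ0)⁻¹ * X) *ᵥ β0)) - X *ᵥ v.2.1)
              + ((-v.1) • (W * (Smat W ρ0)⁻¹)) *ᵥ E ω + ((-v.1) • W) *ᵥ ε ω) ⬝ᵥ
            ((0 : Fin N → ℝ) + (Omat W lam2 ρ0 σ02)⁻¹ *ᵥ E ω
              + ((Omat W lam2 ρ0 σ02)⁻¹ * Smat W ρ0) *ᵥ ε ω)
          + ((0 : Fin N → ℝ) + 1 *ᵥ E ω + Smat W ρ0 *ᵥ ε ω) ⬝ᵥ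
            ((0 : Fin N → ℝ)
              + (-((Omat W lam2 ρ0 σ02)⁻¹ * B1m W lam2 ρ0 v.1 v.2.2 * (Omat W lam2 ρ0 σ02)⁻¹)) *ᵥ E ω
              + ((-((Omat W lam2 ρ0 σ02)⁻¹ * B1m W lam2 ρ0 v.1 v.2.2 * (Omat W lam2 ρ0 σ02)⁻¹))
                  * Smat W ρ0) *ᵥ ε ω)
          + ((0 : Fin N → ℝ) + 1 *ᵥ E ω + Smat W ρ0 *ᵥ ε ω) ⬝ᵥ
            (((Omat W lam2 ρ0 σ02)⁻¹ *ᵥ (-(v.1 • ((W * (Smat W ρ0)⁻¹ * X) *ᵥ β0)) - X *ᵥ v.2.1))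
              + ((-v.1) • ((Omat W lam2 ρ0 σ02)⁻¹ * (W * (Smat W ρ0)⁻¹))) *ᵥ E ω
              + ((-v.1) • ((Omat W lam2 ρ0 σ02)⁻¹ * W)) *ᵥ ε ω)) := by
    intro ω
    have hline : HasDerivAt (fun t : ℝ =>
        ((ρ0, β0, σ02) : ℝ × ((Fin p1 ⊕ Fin p2) → ℝ) × ℝ) + t • v) v 0 := by
      simpa using ((hasDerivAt_id (0:ℝ)).smul_const v).const_add
        ((ρ0, β0, σ02) : ℝ × ((Fin p1 ⊕ Fin p2) → ℝ) × ℝ)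
    have hF : HasFDerivAt (fun θ : ℝ × ((Fin p1 ⊕ Fin p2) → ℝ) × ℝ =>
        nll W lam2 X (Yobs W ρ0 X β0 (E ω) (ε ω)) θ.1 θ.2.1 θ.2.2)
        (fderiv ℝ (fun θ : ℝ × ((Fin p1 ⊕ Fin p2) → ℝ) × ℝ =>
          nll W lam2 X (Yobs W ρ0 X β0 (E ω) (ε ω)) θ.1 θ.2.1 θ.2.2) (ρ0, β0, σ02))
        (((ρ0, β0, σ02) : ℝ × ((Fin p1 ⊕ Fin p2) → ℝ) × ℝ) + (0:ℝ) • v) := by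
      simpa using (hdiff ω).hasFDerivAt
    have h1 : HasDerivAt ((fun θ : ℝ × ((Fin p1 ⊕ Fin p2) → ℝ) × ℝ =>
        nll W lam2 X (Yobs W ρ0 X β0 (E ω) (ε ω)) θ.1 θ.2.1 θ.2.2) ∘
        (fun t : ℝ => ((ρ0, β0, σ02) : ℝ × ((Fin p1 ⊕ Fin p2) → ℝ) × ℝ) + t • v))
        (fderiv ℝ (fun θ : ℝ × ((Fin p1 ⊕ Fin p2) → ℝ) × ℝ =>
          nll W lam2 X (Yobs W ρ0 X β0 (E ω) (ε ω)) θ.1 θ.2.1 θ.2.2) (ρ0, β0, σ02) v) 0 :=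
      HasFDerivAt.comp_hasDerivAt
        (f := fun t : ℝ => ((ρ0, β0, σ02) : ℝ × ((Fin p1 ⊕ Fin p2) → ℝ) × ℝ) + t • v)
        (x := 0) hF hline
    have h2 := nll_line_hasDerivAt W lam2 X (Yobs W ρ0 X β0 (E ω) (ε ω)) ρ0 β0 σ02
      v.1 v.2.1 v.2.2 hSdet hOdet
    have h3 := h1.unique h2
    rw [h3, hOr0d (E ω) (ε ω), hGr0d (E ω) (ε ω), hOrdd (E ω) (ε ω), hrdd (E ω) (ε ω),
      hr0d (E ω) (ε ω)]
  -- integrability of the three bilinear terms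
  have hI1 : Integrable (fun ω =>
      ((-(v.1 • ((W * (Smat W ρ0)⁻¹ * X) *ᵥ β0)) - X *ᵥ v.2.1)
          + ((-v.1) • (W * (Smat W ρ0)⁻¹)) *ᵥ E ω + ((-v.1) • W) *ᵥ ε ω) ⬝ᵥ
        ((0 : Fin N → ℝ) + (Omat W lam2 ρ0 σ02)⁻¹ *ᵥ E ω
          + ((Omat W lam2 ρ0 σ02)⁻¹ * Smat W ρ0) *ᵥ ε ω)) μ :=
    integrable_bilin hE2 hε2 _ _ _ _ _ _
  have hI3 : Integrable (fun ω =>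
      ((0 : Fin N → ℝ) + 1 *ᵥ E ω + Smat W ρ0 *ᵥ ε ω) ⬝ᵥ
        ((0 : Fin N → ℝ)
          + (-((Omat W lam2 ρ0 σ02)⁻¹ * B1m W lam2 ρ0 v.1 v.2.2 * (Omat W lam2 ρ0 σ02)⁻¹)) *ᵥ E ω
          + ((-((Omat W lam2 ρ0 σ02)⁻¹ * B1m W lam2 ρ0 v.1 v.2.2 * (Omat W lam2 ρ0 σ02)⁻¹))
              * Smat W ρ0) *ᵥ ε ω)) μ :=
    integrable_bilin hE2 hε2 _ _ _ _ _ _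
  have hI2 : Integrable (fun ω =>
      ((0 : Fin N → ℝ) + 1 *ᵥ E ω + Smat W ρ0 *ᵥ ε ω) ⬝ᵥ
        (((Omat W lam2 ρ0 σ02)⁻¹ *ᵥ (-(v.1 • ((W * (Smat W ρ0)⁻¹ * X) *ᵥ β0)) - X *ᵥ v.2.1))
          + ((-v.1) • ((Omat W lam2 ρ0 σ02)⁻¹ * (W * (Smat W ρ0)⁻¹))) *ᵥ E ω
          + ((-v.1) • ((Omat W lam2 ρ0 σ02)⁻¹ * W)) *ᵥ ε ω)) μ :=
    integrable_bilin hE2 hε2 _ _ _ _ _ _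
  have hIsum : Integrable (fun ω =>
      ((-(v.1 • ((W * (Smat W ρ0)⁻¹ * X) *ᵥ β0)) - X *ᵥ v.2.1)
          + ((-v.1) • (W * (Smat W ρ0)⁻¹)) *ᵥ E ω + ((-v.1) • W) *ᵥ ε ω) ⬝ᵥ
        ((0 : Fin N → ℝ) + (Omat W lam2 ρ0 σ02)⁻¹ *ᵥ E ω
          + ((Omat W lam2 ρ0 σ02)⁻¹ * Smat W ρ0) *ᵥ ε ω)
      + ((0 : Fin N → ℝ) + 1 *ᵥ E ω + Smat W ρ0 *ᵥ ε ω) ⬝ᵥ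
        ((0 : Fin N → ℝ)
          + (-((Omat W lam2 ρ0 σ02)⁻¹ * B1m W lam2 ρ0 v.1 v.2.2 * (Omat W lam2 ρ0 σ02)⁻¹)) *ᵥ E ω
          + ((-((Omat W lam2 ρ0 σ02)⁻¹ * B1m W lam2 ρ0 v.1 v.2.2 * (Omat W lam2 ρ0 σ02)⁻¹))
              * Smat W ρ0) *ᵥ ε ω)
      + ((0 : Fin N → ℝ) + 1 *ᵥ E ω + Smat W ρ0 *ᵥ ε ω) ⬝ᵥ
        (((Omat W lam2 ρ0 σ02)⁻¹ *ᵥ (-(v.1 • ((W * (Smat W ρ0)⁻¹ * X) *ᵥ β0)) - X *ᵥ v.2.1))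
          + ((-v.1) • ((Omat W lam2 ρ0 σ02)⁻¹ * (W * (Smat W ρ0)⁻¹))) *ᵥ E ω
          + ((-v.1) • ((Omat W lam2 ρ0 σ02)⁻¹ * W)) *ᵥ ε ω)) μ := (hI1.add hI3).add hI2
  have hI13 : Integrable (fun ω =>
      ((-(v.1 • ((W * (Smat W ρ0)⁻¹ * X) *ᵥ β0)) - X *ᵥ v.2.1)
          + ((-v.1) • (W * (Smat W ρ0)⁻¹)) *ᵥ E ω + ((-v.1) • W) *ᵥ ε ω) ⬝ᵥ
        ((0 : Fin N → ℝ) + (Omat W lam2 ρ0 σ02)⁻¹ *ᵥ E ω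
          + ((Omat W lam2 ρ0 σ02)⁻¹ * Smat W ρ0) *ᵥ ε ω)
      +
      ((0 : Fin N → ℝ) + 1 *ᵥ E ω + Smat W ρ0 *ᵥ ε ω) ⬝ᵥ
        ((0 : Fin N → ℝ)
          + (-((Omat W lam2 ρ0 σ02)⁻¹ * B1m W lam2 ρ0 v.1 v.2.2 * (Omat W lam2 ρ0 σ02)⁻¹)) *ᵥ E ω
          + ((-((Omat W lam2 ρ0 σ02)⁻¹ * B1m W lam2 ρ0 v.1 v.2.2 * (Omat W lam2 ρ0 σ02)⁻¹))
              * Smat W ρ0) *ᵥ ε ω)) μ := hI1.add hI3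
  rw [funext hfd]
  rw [integral_add (integrable_const _) (hIsum.const_mul (1/2)), integral_const]
  simp only [measure_univ, ENNReal.toReal_one, probReal_univ, smul_eq_mul, one_mul]
  rw [integral_const_mul, integral_add hI13 hI2, integral_add hI1 hI3]
  rw [integral_bilin hE2 hε2 hEmean hεmean hEvar hepsvar hEEcov hεεcov hEεcov,
    integral_bilin hE2 hε2 hEmean hεmean hEvar hepsvar hEEcov hεεcov hEεcov,
    integral_bilin hE2 hε2 hEmean hεmean hEvar hepsvar hEEcov hεεcov hEεcov]
  have id1 := idT1core W lam2 ρ0 σ02 hSu hOu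
  have id2 := idT2core W lam2 ρ0 σ02 hSu hOu
  have id3 := idT3core W lam2 ρ0 σ02 (B1m W lam2 ρ0 v.1 v.2.2) hOu
  simp only [dotProduct_zero, zero_dotProduct, Matrix.transpose_smul,
    smul_mul_assoc, mul_smul_comm, Matrix.trace_smul, smul_eq_mul, Matrix.transpose_one,
    Matrix.one_mul, zero_add] at id3 ⊢
  linear_combination (-(v.1)/2) * id1 + (1/2) * id3 + (-(v.1)/2) * id2



end PSAR
end

section
/- The expected β-gradient of the noisy-covariate negative log-likelihood at the true parameter equals the explicit bias vector: E[∇_β L*(θ0)] = (0_{p1}ᵀ, λx² tr(Ω0⁻¹) β02ᵀ)ᵀ ∈ ℝ^p. -/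
open MeasureTheory ProbabilityTheory Matrix
open scoped Matrix

namespace PSAR

/- auxiliary lemmas -/

lemma aux_deriv_quad (C a b c d : ℝ) :
    deriv (fun t : ℝ => C + (1/2) * (a - t * b - t * c + t^2 * d)) 0 = -(1/2)*(b + c) := by
  have h : HasDerivAt (fun t : ℝ => C + (1/2) * (a - t * b - t * c + t^2 * d))
      (0 + (1/2) * (0 - 1 * b - 1 * c + ((2:ℕ) * (0:ℝ)^(2-1)) * d)) 0 :=
    (hasDerivAt_const 0 C).add
      (HasDerivAt.const_mul (1/2)
        ((((hasDerivAt_const 0 a).sub ((hasDerivAt_id 0).mul_const b)).sub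
          ((hasDerivAt_id 0).mul_const c)).add ((hasDerivAt_pow 2 0).mul_const d)))
  rw [h.deriv]; push_cast; ring

lemma aux_dot_swap {N : ℕ} (A : Matrix (Fin N) (Fin N) ℝ) (hA : Aᵀ = A) (x y : Fin N → ℝ) :
    x ⬝ᵥ (A *ᵥ y) = y ⬝ᵥ (A *ᵥ x) := by
  rw [Matrix.dotProduct_mulVec, show x ᵥ* A = A *ᵥ x by rw [← Matrix.mulVec_transpose, hA],
    dotProduct_comm]

lemma aux_quad_expand {N : ℕ} (A : Matrix (Fin N) (Fin N) ℝ) (x y : Fin N → ℝ) (t : ℝ) :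
    (x - t • y) ⬝ᵥ (A *ᵥ (x - t • y)) =
      x ⬝ᵥ (A *ᵥ x) - t * (y ⬝ᵥ (A *ᵥ x)) - t * (x ⬝ᵥ (A *ᵥ y)) + t^2 * (y ⬝ᵥ (A *ᵥ y)) := by
  simp only [sub_dotProduct, dotProduct_sub, Matrix.mulVec_sub, Matrix.mulVec_smul,
    smul_dotProduct, dotProduct_smul, smul_eq_mul]
  ring

theorem statement_2
    {Ωs : Type*} [MeasurableSpace Ωs] (μ : Measure Ωs) [IsProbabilityMeasure μ]
    (N p1 p2 : ℕ) (hN : 0 < N) (hp1 : 0 < p1) (hp2 : 0 < p2)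
    (W : Matrix (Fin N) (Fin N) ℝ) (hW : ∀ i, W i i = 0)
    (X : Matrix (Fin N) (Fin p1 ⊕ Fin p2) ℝ)
    (ρ0 : ℝ) (β0 : Fin p1 ⊕ Fin p2 → ℝ) (σ02 lam2 lamx2 : ℝ)
    (hσ : 0 < σ02) (hlam : 0 < lam2) (hlamx : 0 < lamx2)
    (hS0 : 0 < (Smat W ρ0).det)
    (E ε : Ωs → Fin N → ℝ) (Ex : Ωs → Fin N → Fin p2 → ℝ)
    (hindep : iIndepFun (noiseFam E ε Ex) μ)
    (hmom : ∀ z, MemLp (noiseFam E ε Ex z) 4 μ)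
    (hmean : ∀ z, ∫ ω, noiseFam E ε Ex z ω ∂μ = 0)
    (hEvar : ∀ i, ∫ ω, (E ω i) ^ 2 ∂μ = σ02)
    (hepsvar : ∀ i, ∫ ω, (ε ω i) ^ 2 ∂μ = lam2)
    (hExvar : ∀ i j, ∫ ω, (Ex ω i j) ^ 2 ∂μ = lamx2) :
    ∀ j : Fin p1 ⊕ Fin p2,
      ∫ ω, deriv (fun t : ℝ =>
          nll W lam2 (Xobs X (Ex ω)) (Yobs W ρ0 X β0 (E ω) (ε ω)) ρ0
            (β0 + t • (Pi.single j 1 : (Fin p1 ⊕ Fin p2) → ℝ)) σ02) 0 ∂μ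
        = Sum.elim (fun _ => (0 : ℝ))
            (fun k => lamx2 * Matrix.trace (Omat W lam2 ρ0 σ02)⁻¹ * β0 (Sum.inr k)) j
  := by
  classical
  intro j
  set F := noiseFam E ε Ex with hFdef
  set M := (Omat W lam2 ρ0 σ02)⁻¹ with hMdef
  have hS0unit : IsUnit (Smat W ρ0).det := isUnit_iff_ne_zero.mpr (ne_of_gt hS0)
  have hSS : Smat W ρ0 * (Smat W ρ0)⁻¹ = 1 := Matrix.mul_nonsing_inv _ hS0unit
  have hFmeas : ∀ z, AEStronglyMeasurable (F z) μ := fun z => (hmom z).1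
  have hFL2 : ∀ z, MemLp (F z) 2 μ := fun z => (hmom z).mono_exponent (by norm_num)
  have hFint : ∀ z, Integrable (F z) μ := fun z => (hFL2 z).integrable (by norm_num)
  have hFFint : ∀ z1 z2, Integrable (fun ω => F z1 ω * F z2 ω) μ := by
    intro z1 z2
    have h : MemLp (F z1 • F z2) 1 μ :=
      (hFL2 z2).smul (hFL2 z1)
    have := memLp_one_iff_integrable.mp h
    exact this
  have hFF0 : ∀ z1 z2, z1 ≠ z2 → ∫ ω, F z1 ω * F z2 ω ∂μ = 0 := fun z1 z2 hne => by
    rw [(hindep.indepFun hne).integral_fun_mul_eq_mul_integral (hFmeas z1) (hFmeas z2), hmean z1, zero_mul]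
  -- coefficients of r0
  set c : Fin N → (Fin N ⊕ Fin N ⊕ Fin N × Fin p2) → ℝ := fun l z =>
    Sum.elim (fun q => if q = l then 1 else 0)
      (Sum.elim (fun q => Smat W ρ0 l q)
        (fun qm => if qm.1 = l then -(β0 (Sum.inr qm.2)) else 0)) z with hcdef
  have hr0 : ∀ (ω : Ωs) (l : Fin N),
      (Smat W ρ0 *ᵥ Yobs W ρ0 X β0 (E ω) (ε ω) - Xobs X (Ex ω) *ᵥ β0) l
        = ∑ z, c l z * F z ω := by
    intro ω l
    have hY : Smat W ρ0 *ᵥ Yobs W ρ0 X β0 (E ω) (ε ω)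
        = (X *ᵥ β0 + E ω) + Smat W ρ0 *ᵥ ε ω := by
      rw [Yobs, Matrix.mulVec_add, Matrix.mulVec_mulVec, hSS, Matrix.one_mulVec]
    have hX : (Xobs X (Ex ω) *ᵥ β0) l = (X *ᵥ β0) l + ∑ m, Ex ω l m * β0 (Sum.inr m) := by
      rw [Xobs, Matrix.add_mulVec, Pi.add_apply]
      congr 1
      simp [Matrix.mulVec, dotProduct, Fintype.sum_sum_type]
    have hsum : ∑ z, c l z * F z ω
        = E ω l + (Smat W ρ0 *ᵥ ε ω) l - ∑ m, Ex ω l m * β0 (Sum.inr m) := by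
      rw [Fintype.sum_sum_type, Fintype.sum_sum_type, Fintype.sum_prod_type]
      simp only [hcdef, Sum.elim_inl, Sum.elim_inr, hFdef, noiseFam, ite_mul, one_mul,
        zero_mul, neg_mul, Finset.sum_ite_eq', Finset.mem_univ, if_true]
      rw [Finset.sum_comm]
      simp only [Finset.sum_ite_eq', Finset.mem_univ, if_true]
      have h3 : ∑ m : Fin p2, -(β0 (Sum.inr m) * Ex ω l m)
          = -∑ m : Fin p2, Ex ω l m * β0 (Sum.inr m) := by
        rw [← Finset.sum_neg_distrib]
        exact Finset.sum_congr rfl fun m _ => by ring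
      rw [h3]
      simp only [Matrix.mulVec, dotProduct]
      ring
    rw [Pi.sub_apply, hY, hX, hsum]
    simp only [Pi.add_apply]
    ring
  have hOsymm : (Omat W lam2 ρ0 σ02)ᵀ = Omat W lam2 ρ0 σ02 := by
    rw [Omat]
    simp [Matrix.transpose_add, Matrix.transpose_smul, Matrix.transpose_one,
      Matrix.transpose_mul, Matrix.transpose_transpose]
  have hMsymm : Mᵀ = M := by
    rw [hMdef, Matrix.transpose_nonsing_inv, hOsymm]
  have hkey : ∀ ω : Ωs,
      deriv (fun t : ℝ => nll W lam2 (Xobs X (Ex ω)) (Yobs W ρ0 X β0 (E ω) (ε ω)) ρ0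
          (β0 + t • (Pi.single j 1 : (Fin p1 ⊕ Fin p2) → ℝ)) σ02) 0
        = -((fun i => Xobs X (Ex ω) i j) ⬝ᵥ
            (M *ᵥ (Smat W ρ0 *ᵥ Yobs W ρ0 X β0 (E ω) (ε ω) - Xobs X (Ex ω) *ᵥ β0))) := by
    intro ω
    have hw : Xobs X (Ex ω) *ᵥ (Pi.single j 1 : (Fin p1 ⊕ Fin p2) → ℝ)
        = fun i => Xobs X (Ex ω) i j := by
      simp [Matrix.mulVec_single]; rfl
    have hfun : (fun t : ℝ => nll W lam2 (Xobs X (Ex ω)) (Yobs W ρ0 X β0 (E ω) (ε ω)) ρ0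
          (β0 + t • (Pi.single j 1 : (Fin p1 ⊕ Fin p2) → ℝ)) σ02)
        = fun t : ℝ =>
          (- Real.log (Smat W ρ0).det + (1 / 2) * Real.log (Omat W lam2 ρ0 σ02).det)
          + (1 / 2) *
            (((Smat W ρ0 *ᵥ Yobs W ρ0 X β0 (E ω) (ε ω) - Xobs X (Ex ω) *ᵥ β0) ⬝ᵥ
                (M *ᵥ (Smat W ρ0 *ᵥ Yobs W ρ0 X β0 (E ω) (ε ω) - Xobs X (Ex ω) *ᵥ β0)))
              - t * ((fun i => Xobs X (Ex ω) i j) ⬝ᵥ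
                (M *ᵥ (Smat W ρ0 *ᵥ Yobs W ρ0 X β0 (E ω) (ε ω) - Xobs X (Ex ω) *ᵥ β0)))
              - t * ((Smat W ρ0 *ᵥ Yobs W ρ0 X β0 (E ω) (ε ω) - Xobs X (Ex ω) *ᵥ β0) ⬝ᵥ
                (M *ᵥ (fun i => Xobs X (Ex ω) i j)))
              + t ^ 2 * ((fun i => Xobs X (Ex ω) i j) ⬝ᵥ
                (M *ᵥ (fun i => Xobs X (Ex ω) i j)))) := by
      funext t
      rw [nll, Matrix.mulVec_add, Matrix.mulVec_smul, hw, sub_add_eq_sub_sub,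
        ← hMdef, aux_quad_expand]
    rw [hfun, aux_deriv_quad,
      aux_dot_swap M hMsymm (Smat W ρ0 *ᵥ Yobs W ρ0 X β0 (E ω) (ε ω) - Xobs X (Ex ω) *ᵥ β0)
        (fun i => Xobs X (Ex ω) i j)]
    ring
  have heq : ∀ ω : Ωs,
      deriv (fun t : ℝ => nll W lam2 (Xobs X (Ex ω)) (Yobs W ρ0 X β0 (E ω) (ε ω)) ρ0
          (β0 + t • (Pi.single j 1 : (Fin p1 ⊕ Fin p2) → ℝ)) σ02) 0
        = -∑ i : Fin N, ∑ l : Fin N,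
            M i l * (Xobs X (Ex ω) i j * (∑ z, c l z * F z ω)) := by
    intro ω
    rw [hkey ω]
    congr 1
    have hrv : (Smat W ρ0 *ᵥ Yobs W ρ0 X β0 (E ω) (ε ω) - Xobs X (Ex ω) *ᵥ β0)
        = fun l => ∑ z, c l z * F z ω := funext (hr0 ω)
    rw [hrv]
    simp only [dotProduct, Matrix.mulVec]
    refine Finset.sum_congr rfl fun i _ => ?_
    rw [Finset.mul_sum]
    exact Finset.sum_congr rfl fun l _ => by ring
  have hsumint : ∀ l, Integrable (fun ω => ∑ z, c l z * F z ω) μ :=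
    fun l => integrable_finset_sum _ fun z _ => (hFint z).const_mul _
  have hzero : ∀ l, ∫ ω, (∑ z, c l z * F z ω) ∂μ = 0 := by
    intro l
    rw [integral_finset_sum _ fun z _ => (hFint z).const_mul _]
    simp [integral_const_mul, hmean]
  have hFsumrw : ∀ z0 l, (fun ω => F z0 ω * (∑ z, c l z * F z ω))
      = fun ω => ∑ z, c l z * (F z0 ω * F z ω) := by
    intro z0 l; funext ω; rw [Finset.mul_sum]
    exact Finset.sum_congr rfl fun z _ => by ring
  have hFsumint : ∀ z0 l, Integrable (fun ω => F z0 ω * (∑ z, c l z * F z ω)) μ := by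
    intro z0 l; rw [hFsumrw]
    exact integrable_finset_sum _ fun z _ => (hFFint z0 z).const_mul _
  have hprod : ∀ z0 l, ∫ ω, F z0 ω * (∑ z, c l z * F z ω) ∂μ
      = c l z0 * ∫ ω, F z0 ω * F z0 ω ∂μ := by
    intro z0 l
    rw [hFsumrw, integral_finset_sum _ fun z _ => (hFFint z0 z).const_mul _]
    rw [Finset.sum_eq_single z0 (fun z _ hz => ?_) (fun h => absurd (Finset.mem_univ z0) h)]
    · rw [integral_const_mul]
    · rw [integral_const_mul, hFF0 z0 z (fun h => hz h.symm), mul_zero]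
  obtain a | k := j
  · have hXo : ∀ (ω : Ωs) (i : Fin N), Xobs X (Ex ω) i (Sum.inl a) = X i (Sum.inl a) := by
      intro ω i; simp [Xobs]
    have h1 : ∀ ω : Ωs,
        deriv (fun t : ℝ => nll W lam2 (Xobs X (Ex ω)) (Yobs W ρ0 X β0 (E ω) (ε ω)) ρ0
            (β0 + t • (Pi.single (Sum.inl a) 1 : (Fin p1 ⊕ Fin p2) → ℝ)) σ02) 0
          = -∑ i : Fin N, ∑ l : Fin N,
              M i l * (X i (Sum.inl a) * (∑ z, c l z * F z ω)) := by
      intro ω; rw [heq ω]; simp only [hXo]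
    simp only [h1]
    rw [integral_neg,
      integral_finset_sum _ (f := fun i ω => ∑ l : Fin N, M i l * (X i (Sum.inl a) * (∑ z, c l z * F z ω))) (fun i _ =>
        integrable_finset_sum _ (fun l _ => ((hsumint l).const_mul _).const_mul _))]
    have h2 : ∀ i : Fin N,
        ∫ ω, (∑ l : Fin N, M i l * (X i (Sum.inl a) * (∑ z, c l z * F z ω))) ∂μ = 0 := by
      intro i
      rw [integral_finset_sum _ (fun l _ => ((hsumint l).const_mul _).const_mul _)]
      refine Finset.sum_eq_zero fun l _ => ?_
      rw [integral_const_mul, integral_const_mul, hzero l, mul_zero, mul_zero]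
    rw [Finset.sum_congr rfl (fun i _ => h2 i)]
    simp
  · have hXo : ∀ (ω : Ωs) (i : Fin N),
        Xobs X (Ex ω) i (Sum.inr k) = X i (Sum.inr k) + F (Sum.inr (Sum.inr (i, k))) ω := by
      intro ω i; simp [Xobs, hFdef, noiseFam]
    have hGrw : ∀ i l : Fin N,
        (fun ω => M i l * (Xobs X (Ex ω) i (Sum.inr k) * (∑ z, c l z * F z ω)))
          = fun ω => M i l * (X i (Sum.inr k) * (∑ z, c l z * F z ω))
              + M i l * (F (Sum.inr (Sum.inr (i, k))) ω * (∑ z, c l z * F z ω)) := by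
      intro i l; funext ω; rw [hXo]; ring
    have hGint : ∀ i l : Fin N,
        Integrable (fun ω => M i l * (Xobs X (Ex ω) i (Sum.inr k) * (∑ z, c l z * F z ω))) μ := by
      intro i l; rw [hGrw]
      exact (((hsumint l).const_mul _).const_mul _).add ((hFsumint _ l).const_mul _)
    have hvar : ∀ i : Fin N,
        ∫ ω, F (Sum.inr (Sum.inr (i, k))) ω * F (Sum.inr (Sum.inr (i, k))) ω ∂μ = lamx2 := by
      intro i
      have h := hExvar i k
      simpa [hFdef, noiseFam, pow_two] using h
    have hterm : ∀ i l : Fin N,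
        ∫ ω, M i l * (Xobs X (Ex ω) i (Sum.inr k) * (∑ z, c l z * F z ω)) ∂μ
          = M i l * (c l (Sum.inr (Sum.inr (i, k))) * lamx2) := by
      intro i l
      rw [hGrw,
        integral_add (((hsumint l).const_mul _).const_mul _) ((hFsumint _ l).const_mul _),
        integral_const_mul, integral_const_mul, integral_const_mul, hzero l,
        hprod _ l, hvar i]
      ring
    simp only [heq]
    rw [integral_neg,
      integral_finset_sum _ (fun i _ => integrable_finset_sum _ (fun l _ => hGint i l))]
    have h3 : ∀ i : Fin N,
        ∫ ω, (∑ l : Fin N, M i l * (Xobs X (Ex ω) i (Sum.inr k) * (∑ z, c l z * F z ω))) ∂μ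
          = ∑ l : Fin N, M i l * (c l (Sum.inr (Sum.inr (i, k))) * lamx2) := by
      intro i
      rw [integral_finset_sum _ (fun l _ => hGint i l)]
      exact Finset.sum_congr rfl fun l _ => hterm i l
    rw [Finset.sum_congr rfl (fun i _ => h3 i)]
    have hc : ∀ i l : Fin N,
        c l (Sum.inr (Sum.inr (i, k))) = if i = l then -β0 (Sum.inr k) else 0 := fun i l => rfl
    have h4 : ∀ i : Fin N,
        ∑ l : Fin N, M i l * (c l (Sum.inr (Sum.inr (i, k))) * lamx2)
          = M i i * (-β0 (Sum.inr k) * lamx2) := by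
      intro i
      simp only [hc]
      rw [Finset.sum_eq_single i
        (fun l _ hl => by rw [if_neg (fun h => hl h.symm), zero_mul, mul_zero])
        (fun h => absurd (Finset.mem_univ i) h)]
      rw [if_pos rfl]
    rw [Finset.sum_congr rfl (fun i _ => h4 i)]
    have htr : Matrix.trace M = ∑ i : Fin N, M i i := by
      simp [Matrix.trace, Matrix.diag]
    rw [show ∑ i : Fin N, M i i * (-β0 (Sum.inr k) * lamx2)
        = (∑ i : Fin N, M i i) * (-β0 (Sum.inr k) * lamx2) from (Finset.sum_mul _ _ _).symm]
    simp only [Sum.elim_inr]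
    rw [htr]
    ring

end PSAR
end

section
/- The expected σ²-derivative of the noisy-covariate negative log-likelihood at the true parameter equals the explicit bias term: E[∂L*/∂σ² (θ0)] = −(1/2) λx² (β02ᵀ β02) tr(Ω0⁻²). -/
open MeasureTheory ProbabilityTheory Matrix
open scoped Matrix

namespace PSAR

lemma omat_spectral {N : ℕ} (W : Matrix (Fin N) (Fin N) ℝ) (lam2 ρ0 : ℝ) (hlam : 0 ≤ lam2) :
    ∃ (U : Matrix (Fin N) (Fin N) ℝ) (lam : Fin N → ℝ),
      U * star U = 1 ∧ star U * U = 1 ∧ (∀ i, 0 ≤ lam i) ∧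
      ∀ s : ℝ, Omat W lam2 ρ0 s = U * Matrix.diagonal (fun i => s + lam i) * star U := by
  set A := Real.sqrt lam2 • Smat W ρ0 with hA
  have hC : lam2 • (Smat W ρ0 * (Smat W ρ0)ᵀ) = A * Aᴴ := by
    rw [Matrix.conjTranspose_eq_transpose_of_trivial, hA, Matrix.transpose_smul,
      Matrix.smul_mul, Matrix.mul_smul, smul_smul, Real.mul_self_sqrt hlam]
  have hps : (A * Aᴴ).PosSemidef := Matrix.posSemidef_self_mul_conjTranspose A
  have hH := hps.1
  set U : Matrix (Fin N) (Fin N) ℝ := (hH.eigenvectorUnitary : Matrix (Fin N) (Fin N) ℝ) with hU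
  have hUmem := hH.eigenvectorUnitary.2
  have h1 : U * star U = 1 := Matrix.mem_unitaryGroup_iff.mp hUmem
  have h2 : star U * U = 1 := Matrix.mem_unitaryGroup_iff'.mp hUmem
  refine ⟨U, hH.eigenvalues, h1, h2, hps.eigenvalues_nonneg, fun s => ?_⟩
  have hspec : A * Aᴴ = U * Matrix.diagonal hH.eigenvalues * star U := by
    have := hH.spectral_theorem
    simp [Function.comp] at this
    exact this
  have hsone : s • (1 : Matrix (Fin N) (Fin N) ℝ) = U * Matrix.diagonal (fun _ => s) * star U := by
    rw [← Matrix.smul_one_eq_diagonal]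
    rw [Matrix.mul_smul, Matrix.mul_one, Matrix.smul_mul, h1]
  rw [Omat, hC]
  calc s • (1 : Matrix (Fin N) (Fin N) ℝ) + A * Aᴴ
      = U * Matrix.diagonal (fun _ => s) * star U
        + U * Matrix.diagonal hH.eigenvalues * star U := by rw [← hsone, ← hspec]
    _ = U * Matrix.diagonal (fun i => s + hH.eigenvalues i) * star U := by
        rw [← Matrix.add_mul, ← Matrix.mul_add, ← Matrix.diagonal_add]

lemma omat_det_pos {N : ℕ} (W : Matrix (Fin N) (Fin N) ℝ) {lam2 ρ0 σ02 : ℝ}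
    (hσ : 0 < σ02) (hlam : 0 ≤ lam2) : 0 < (Omat W lam2 ρ0 σ02).det := by
  obtain ⟨U, lam, h1, h2, hlam0, hO⟩ := omat_spectral W lam2 ρ0 hlam
  have hdetU : U.det * (star U).det = 1 := by rw [← Matrix.det_mul, h1, Matrix.det_one]
  have : (Omat W lam2 ρ0 σ02).det = ∏ i, (σ02 + lam i) := by
    rw [hO σ02, Matrix.det_mul, Matrix.det_mul, Matrix.det_diagonal,
      mul_comm U.det _, mul_assoc, hdetU, mul_one]
  rw [this]
  exact Finset.prod_pos fun i _ => add_pos_of_pos_of_nonneg hσ (hlam0 i)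

lemma deriv_nll {N p1 p2 : ℕ} (W : Matrix (Fin N) (Fin N) ℝ)
    (X' : Matrix (Fin N) (Fin p1 ⊕ Fin p2) ℝ) (Ys : Fin N → ℝ)
    {lam2 ρ0 σ02 : ℝ} (β0 : Fin p1 ⊕ Fin p2 → ℝ) (hσ : 0 < σ02) (hlam : 0 ≤ lam2) :
    deriv (fun s => nll W lam2 X' Ys ρ0 β0 s) σ02
      = (1 / 2) * Matrix.trace ((Omat W lam2 ρ0 σ02)⁻¹)
        - (1 / 2) * ((Smat W ρ0 *ᵥ Ys - X' *ᵥ β0) ⬝ᵥ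
            (((Omat W lam2 ρ0 σ02)⁻¹ * (Omat W lam2 ρ0 σ02)⁻¹) *ᵥ
              (Smat W ρ0 *ᵥ Ys - X' *ᵥ β0))) := by
  obtain ⟨U, lam, hUU, hUU', hlam0, hO⟩ := omat_spectral W lam2 ρ0 hlam
  set r := Smat W ρ0 *ᵥ Ys - X' *ᵥ β0 with hrdef
  set v := star U *ᵥ r with hvdef
  have hpos : ∀ s : ℝ, 0 < s → ∀ i, 0 < s + lam i :=
    fun s hs i => add_pos_of_pos_of_nonneg hs (hlam0 i)
  have hdetU : U.det * (star U).det = 1 := by rw [← Matrix.det_mul, hUU, Matrix.det_one]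
  have hdet : ∀ s : ℝ, (Omat W lam2 ρ0 s).det = ∏ i, (s + lam i) := by
    intro s
    rw [hO s, Matrix.det_mul, Matrix.det_mul, Matrix.det_diagonal,
      mul_comm U.det _, mul_assoc, hdetU, mul_one]
  have key : ∀ D D' : Matrix (Fin N) (Fin N) ℝ,
      (U * D * star U) * (U * D' * star U) = U * (D * D') * star U := by
    intro D D'
    have h1 : star U * (U * (D' * star U)) = D' * star U := by
      rw [← Matrix.mul_assoc, hUU', Matrix.one_mul]
    calc U * D * star U * (U * D' * star U)
        = U * (D * (star U * (U * (D' * star U)))) := by simp only [Matrix.mul_assoc]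
      _ = U * (D * (D' * star U)) := by rw [h1]
      _ = U * (D * D') * star U := by simp only [Matrix.mul_assoc]
  have hinv : ∀ s : ℝ, 0 < s →
      (Omat W lam2 ρ0 s)⁻¹ = U * Matrix.diagonal (fun i => (s + lam i)⁻¹) * star U := by
    intro s hs
    apply Matrix.inv_eq_right_inv
    rw [hO s, key]
    have h1 : (fun i => (s + lam i) * (s + lam i)⁻¹) = fun _ => (1 : ℝ) :=
      funext fun i => mul_inv_cancel₀ (hpos s hs i).ne'
    rw [Matrix.diagonal_mul_diagonal, h1, Matrix.diagonal_one, Matrix.mul_one, hUU]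
  have hUt : star U = Uᵀ := by
    rw [Matrix.star_eq_conjTranspose, Matrix.conjTranspose_eq_transpose_of_trivial]
  have hquad : ∀ f : Fin N → ℝ,
      r ⬝ᵥ ((U * Matrix.diagonal f * star U) *ᵥ r) = ∑ i, f i * (v i * v i) := by
    intro f
    have h1 : (U * Matrix.diagonal f * star U) *ᵥ r
        = U *ᵥ (Matrix.diagonal f *ᵥ v) := by
      rw [hvdef, Matrix.mulVec_mulVec, Matrix.mulVec_mulVec, Matrix.mul_assoc]
    rw [h1, Matrix.dotProduct_mulVec, ← Matrix.mulVec_transpose, ← hUt, ← hvdef]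
    simp only [dotProduct, Matrix.mulVec_diagonal]
    exact Finset.sum_congr rfl fun i _ => by ring
  have htr : Matrix.trace ((Omat W lam2 ρ0 σ02)⁻¹) = ∑ i, (σ02 + lam i)⁻¹ := by
    rw [hinv σ02 hσ, Matrix.trace_mul_cycle, hUU', Matrix.one_mul, Matrix.trace_diagonal]
  have hsq : (Omat W lam2 ρ0 σ02)⁻¹ * (Omat W lam2 ρ0 σ02)⁻¹
      = U * Matrix.diagonal (fun i => (σ02 + lam i)⁻¹ * (σ02 + lam i)⁻¹) * star U := by
    rw [hinv σ02 hσ, key, Matrix.diagonal_mul_diagonal]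
  -- the eventual form of the function
  set G : ℝ → ℝ := fun s => - Real.log (Smat W ρ0).det
      + (1 / 2) * (∑ i, Real.log (s + lam i))
      + (1 / 2) * (∑ i, (s + lam i)⁻¹ * (v i * v i)) with hGdef
  have heq : ∀ s ∈ Set.Ioi (0:ℝ), (fun s => nll W lam2 X' Ys ρ0 β0 s) s = G s := by
    intro s hs
    have hs' : (0:ℝ) < s := hs
    simp only [nll, hGdef, ← hrdef]
    rw [hdet s, Real.log_prod (fun i _ => (hpos s hs' i).ne'), hinv s hs', hquad]
  have hevent : (fun s => nll W lam2 X' Ys ρ0 β0 s) =ᶠ[nhds σ02] G :=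
    Filter.eventuallyEq_of_mem (isOpen_Ioi.mem_nhds hσ) heq
  have ha : HasDerivAt (fun s : ℝ => ∑ i, Real.log (s + lam i))
      (∑ i, (1 : ℝ) / (σ02 + lam i)) σ02 := by
    apply HasDerivAt.fun_sum
    intro i _
    simpa using (((hasDerivAt_id σ02).add_const (lam i)).log (hpos σ02 hσ i).ne')
  have hb : HasDerivAt (fun s : ℝ => ∑ i, (s + lam i)⁻¹ * (v i * v i))
      (∑ i, (-1 / (σ02 + lam i) ^ 2) * (v i * v i)) σ02 := by
    apply HasDerivAt.fun_sum
    intro i _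
    simpa using (((hasDerivAt_id σ02).add_const (lam i)).inv (hpos σ02 hσ i).ne').mul_const
      (v i * v i)
  have hG : HasDerivAt G ((1/2) * (∑ i, (1 : ℝ) / (σ02 + lam i))
      + (1/2) * (∑ i, (-1 / (σ02 + lam i) ^ 2) * (v i * v i))) σ02 := by
    exact ((ha.const_mul (1/2 : ℝ)).const_add (- Real.log (Smat W ρ0).det)).add
      (hb.const_mul (1/2 : ℝ))
  rw [hevent.deriv_eq, hG.deriv, htr, hsq, hquad]
  rw [Finset.mul_sum, Finset.mul_sum, Finset.mul_sum, Finset.mul_sum, ← Finset.sum_sub_distrib,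
    ← Finset.sum_add_distrib]
  apply Finset.sum_congr rfl
  intro i _
  have h0 : σ02 + lam i ≠ 0 := (hpos σ02 hσ i).ne'
  field_simp
  ring


theorem statement_3
    {Ωs : Type*} [MeasurableSpace Ωs] (μ : Measure Ωs) [IsProbabilityMeasure μ]
    (N p1 p2 : ℕ) (hN : 0 < N) (hp1 : 0 < p1) (hp2 : 0 < p2)
    (W : Matrix (Fin N) (Fin N) ℝ) (hW : ∀ i, W i i = 0)
    (X : Matrix (Fin N) (Fin p1 ⊕ Fin p2) ℝ)
    (ρ0 : ℝ) (β0 : Fin p1 ⊕ Fin p2 → ℝ) (σ02 lam2 lamx2 : ℝ)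
    (hσ : 0 < σ02) (hlam : 0 < lam2) (hlamx : 0 < lamx2)
    (hS0 : 0 < (Smat W ρ0).det)
    (E ε : Ωs → Fin N → ℝ) (Ex : Ωs → Fin N → Fin p2 → ℝ)
    (hindep : iIndepFun (noiseFam E ε Ex) μ)
    (hmom : ∀ z, MemLp (noiseFam E ε Ex z) 4 μ)
    (hmean : ∀ z, ∫ ω, noiseFam E ε Ex z ω ∂μ = 0)
    (hEvar : ∀ i, ∫ ω, (E ω i) ^ 2 ∂μ = σ02)
    (hepsvar : ∀ i, ∫ ω, (ε ω i) ^ 2 ∂μ = lam2)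
    (hExvar : ∀ i j, ∫ ω, (Ex ω i j) ^ 2 ∂μ = lamx2) :
    ∫ ω, deriv (fun s =>
        nll W lam2 (Xobs X (Ex ω)) (Yobs W ρ0 X β0 (E ω) (ε ω)) ρ0 β0 s) σ02 ∂μ
      = -(1 / 2) * lamx2 * (∑ k, β0 (Sum.inr k) ^ 2) *
          Matrix.trace ((Omat W lam2 ρ0 σ02)⁻¹ * (Omat W lam2 ρ0 σ02)⁻¹)
  := by
  classical
  have hSu : IsUnit (Smat W ρ0).det := isUnit_iff_ne_zero.mpr hS0.ne'
  have hΩu : IsUnit (Omat W lam2 ρ0 σ02).det :=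
    isUnit_iff_ne_zero.mpr (omat_det_pos W hσ hlam.le).ne'
  set Ω : Matrix (Fin N) (Fin N) ℝ := Omat W lam2 ρ0 σ02 with hΩdef
  set M : Matrix (Fin N) (Fin N) ℝ := Ω⁻¹ * Ω⁻¹ with hMdef
  set Z := noiseFam E ε Ex with hZdef
  set coef : Fin N → (Fin N ⊕ (Fin N ⊕ Fin N × Fin p2)) → ℝ :=
    fun i => Sum.elim (fun k => if i = k then 1 else 0)
      (Sum.elim (fun k => Smat W ρ0 i k) (fun q => if i = q.1 then -β0 (Sum.inr q.2) else 0))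
    with hcoefdef
  set vr : (Fin N ⊕ (Fin N ⊕ Fin N × Fin p2)) → ℝ :=
    Sum.elim (fun _ => σ02) (Sum.elim (fun _ => lam2) (fun _ => lamx2)) with hvrdef
  set r : Ωs → Fin N → ℝ :=
    fun ω => Smat W ρ0 *ᵥ Yobs W ρ0 X β0 (E ω) (ε ω) - Xobs X (Ex ω) *ᵥ β0 with hrdef
  set cκ : ℝ := lamx2 * ∑ k, β0 (Sum.inr k) ^ 2 with hcκ
  -- representation of the residual as a linear combination of the noise family
  have hr : ∀ ω i, r ω i = ∑ a, coef i a * Z a ω := by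
    intro ω i
    have h1 : Smat W ρ0 *ᵥ Yobs W ρ0 X β0 (E ω) (ε ω)
        = (X *ᵥ β0 + E ω) + Smat W ρ0 *ᵥ ε ω := by
      rw [Yobs, Matrix.mulVec_add, Matrix.mulVec_mulVec, Matrix.mul_nonsing_inv _ hSu,
        Matrix.one_mulVec]
    have h2 : (Xobs X (Ex ω) *ᵥ β0) i = (X *ᵥ β0) i + ∑ k, Ex ω i k * β0 (Sum.inr k) := by
      rw [Xobs, Matrix.add_mulVec, Pi.add_apply]
      congr 1
      simp [Matrix.mulVec, dotProduct, Fintype.sum_sum_type]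
    have hswap : (∑ k, -(β0 (Sum.inr k) * Ex ω i k)) = - ∑ k, Ex ω i k * β0 (Sum.inr k) := by
      rw [← Finset.sum_neg_distrib]
      exact Finset.sum_congr rfl fun k _ => by ring
    have h3 : r ω i = E ω i + ((∑ k, Smat W ρ0 i k * ε ω k)
        + ∑ k, -(β0 (Sum.inr k) * Ex ω i k)) := by
      rw [hswap]
      simp only [hrdef, Pi.sub_apply, h1, Pi.add_apply, h2]
      simp only [Matrix.mulVec, dotProduct]
      ring
    rw [h3, Fintype.sum_sum_type, Fintype.sum_sum_type, Fintype.sum_prod_type]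
    simp only [hcoefdef, hZdef, noiseFam, Sum.elim_inl, Sum.elim_inr, ite_mul, one_mul,
      zero_mul, neg_mul]
    rw [Finset.sum_comm]
    simp only [Finset.sum_ite_eq, Finset.mem_univ, if_true]
  -- integrability and moments of products of noise variables
  have hZ2 : ∀ a, MemLp (Z a) 2 μ := fun a => (hmom a).mono_exponent (by norm_num)
  have hZint : ∀ a, Integrable (Z a) μ := fun a => (hZ2 a).integrable (by norm_num)
  have hmulint : ∀ a b, Integrable (fun ω => Z a ω * Z b ω) μ := by
    intro a b
    rcases eq_or_ne a b with rfl | hab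
    · simpa [pow_two] using (hZ2 a).integrable_sq
    · exact (hindep.indepFun hab).integrable_mul (hZint a) (hZint b)
  have hmul0 : ∀ a b, a ≠ b → ∫ ω, Z a ω * Z b ω ∂μ = 0 := by
    intro a b hab
    have h := (hindep.indepFun hab).integral_mul_eq_mul_integral (hZint a).1 (hZint b).1
    rw [Pi.mul_def] at h
    rw [h, hmean a, zero_mul]
  have hZsq : ∀ a, ∫ ω, Z a ω * Z a ω ∂μ = vr a := by
    intro a
    have hsq : ∀ ω, Z a ω * Z a ω = Z a ω ^ 2 := fun ω => (pow_two _).symm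
    rw [integral_congr_ae (Filter.Eventually.of_forall fun ω => hsq ω)]
    rcases a with i | (i | q)
    · simpa [hZdef, noiseFam, hvrdef] using hEvar i
    · simpa [hZdef, noiseFam, hvrdef] using hepsvar i
    · simpa [hZdef, noiseFam, hvrdef] using hExvar q.1 q.2
  -- integrability and covariance of the residual
  have hrprod : ∀ i j, (fun ω => r ω i * r ω j)
      = fun ω => ∑ a, ∑ b, (coef i a * coef j b) * (Z a ω * Z b ω) := by
    intro i j
    funext ω
    rw [hr ω i, hr ω j, Finset.sum_mul_sum]
    exact Finset.sum_congr rfl fun a _ => Finset.sum_congr rfl fun b _ => by ring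
  have hrint : ∀ i j, Integrable (fun ω => r ω i * r ω j) μ := by
    intro i j
    rw [hrprod i j]
    exact integrable_finset_sum _ fun a _ => integrable_finset_sum _ fun b _ =>
      (hmulint a b).const_mul _
  have hcov : ∀ i j, ∫ ω, r ω i * r ω j ∂μ
      = Ω i j + cκ * (1 : Matrix (Fin N) (Fin N) ℝ) i j := by
    intro i j
    have step1 : ∫ ω, r ω i * r ω j ∂μ = ∑ a, coef i a * coef j a * vr a := by
      rw [show (fun ω => r ω i * r ω j) = _ from hrprod i j,
        integral_finset_sum _ (fun a _ => integrable_finset_sum _ fun b _ =>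
          (hmulint a b).const_mul _)]
      refine Finset.sum_congr rfl fun a _ => ?_
      rw [integral_finset_sum _ (fun b _ => (hmulint a b).const_mul _)]
      rw [Finset.sum_congr rfl fun b _ => integral_const_mul (coef i a * coef j b)
        (fun ω => Z a ω * Z b ω)]
      rw [Finset.sum_eq_single a]
      · rw [hZsq a]
      · intro b _ hba
        rw [hmul0 a b (fun h => hba h.symm), mul_zero]
      · intro h; exact absurd (Finset.mem_univ a) h
    rw [step1, hcκ, Fintype.sum_sum_type, Fintype.sum_sum_type, Fintype.sum_prod_type]
    have hΩapp : Ω i j = σ02 * (1 : Matrix (Fin N) (Fin N) ℝ) i j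
        + lam2 * ∑ k, Smat W ρ0 i k * Smat W ρ0 j k := by
      simp [hΩdef, Omat, Matrix.add_apply, Matrix.smul_apply, smul_eq_mul, Matrix.mul_apply,
        Matrix.transpose_apply]
    rw [hΩapp]
    simp only [hcoefdef, hvrdef, Sum.elim_inl, Sum.elim_inr]
    have e2 : ∑ k, Smat W ρ0 i k * Smat W ρ0 j k * lam2
        = lam2 * ∑ k, Smat W ρ0 i k * Smat W ρ0 j k := by
      rw [Finset.mul_sum]; exact Finset.sum_congr rfl fun k _ => by ring
    rcases eq_or_ne i j with rfl | hij
    · simp only [Matrix.one_apply_eq, mul_one]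
      rw [e2]
      have e1 : ∑ k, (if i = k then (1:ℝ) else 0) * (if i = k then (1:ℝ) else 0) * σ02
          = σ02 := by simp [ite_mul, Finset.sum_ite_eq]
      have e3 : ∑ k, ∑ m, (if i = k then -β0 (Sum.inr m) else 0)
            * (if i = k then -β0 (Sum.inr m) else 0) * lamx2
          = lamx2 * ∑ m, β0 (Sum.inr m) ^ 2 := by
        rw [Finset.sum_comm, Finset.mul_sum]
        refine Finset.sum_congr rfl fun m _ => ?_
        simp [ite_mul, Finset.sum_ite_eq]
        ring
      rw [e1, e3]
      ring
    · have hij' : j ≠ i := fun h => hij h.symm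
      simp only [Matrix.one_apply_ne hij, mul_zero, add_zero]
      rw [e2]
      have e1 : ∑ k, (if i = k then (1:ℝ) else 0) * (if j = k then (1:ℝ) else 0) * σ02
          = 0 := by
        apply Finset.sum_eq_zero
        intro k _
        rcases eq_or_ne i k with rfl | hik
        · simp [hij']
        · simp [hik]
      have e3 : ∑ k, ∑ m, (if i = k then -β0 (Sum.inr m) else 0)
            * (if j = k then -β0 (Sum.inr m) else 0) * lamx2 = 0 := by
        apply Finset.sum_eq_zero
        intro k _
        apply Finset.sum_eq_zero
        intro m _
        rcases eq_or_ne i k with rfl | hik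
        · simp [show ¬ j = i from hij']
        · simp [hik]
      rw [e1, e3]
      ring
  -- pointwise value of the derivative
  have hderiv : ∀ ω, deriv (fun s =>
        nll W lam2 (Xobs X (Ex ω)) (Yobs W ρ0 X β0 (E ω) (ε ω)) ρ0 β0 s) σ02
      = (1/2) * Matrix.trace Ω⁻¹ - (1/2) * ∑ i, ∑ j, M i j * (r ω i * r ω j) := by
    intro ω
    rw [deriv_nll W (Xobs X (Ex ω)) (Yobs W ρ0 X β0 (E ω) (ε ω)) β0 hσ hlam.le]
    have hx : Smat W ρ0 *ᵥ Yobs W ρ0 X β0 (E ω) (ε ω) - Xobs X (Ex ω) *ᵥ β0 = r ω := rfl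
    rw [hx, ← hΩdef, ← hMdef]
    congr 1
    congr 1
    simp only [dotProduct, Matrix.mulVec, Finset.mul_sum]
    refine Finset.sum_congr rfl fun i _ => Finset.sum_congr rfl fun j _ => by ring
  -- put everything together
  have hqint : Integrable (fun ω => ∑ i, ∑ j, M i j * (r ω i * r ω j)) μ :=
    integrable_finset_sum _ fun i _ => integrable_finset_sum _ fun j _ =>
      (hrint i j).const_mul _
  rw [integral_congr_ae (Filter.Eventually.of_forall hderiv),
    integral_sub (integrable_const _) (hqint.const_mul _), integral_const, MeasureTheory.integral_const_mul,
    integral_finset_sum (f := fun i ω => ∑ j, M i j * (r ω i * r ω j)) _ (fun i _ => integrable_finset_sum _ fun j _ =>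
      (hrint i j).const_mul _)]
  have hsum : ∀ i, ∫ ω, ∑ j, M i j * (r ω i * r ω j) ∂μ
      = ∑ j, M i j * (Ω i j + cκ * (1 : Matrix (Fin N) (Fin N) ℝ) i j) := by
    intro i
    rw [integral_finset_sum _ (fun j _ => (hrint i j).const_mul _)]
    exact Finset.sum_congr rfl fun j _ => by rw [integral_const_mul, hcov]
  rw [Finset.sum_congr rfl fun i _ => hsum i]
  -- trace identities
  have hMΩ : M * Ω = Ω⁻¹ := by
    rw [hMdef, Matrix.mul_assoc, Matrix.nonsing_inv_mul _ hΩu, Matrix.mul_one]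
  have hsymm : ∀ i j, Ω i j = Ω j i := by
    intro i j
    simp [hΩdef, Omat, Matrix.add_apply, Matrix.smul_apply, Matrix.mul_apply,
      Matrix.transpose_apply, Matrix.one_apply, eq_comm, mul_comm]
  have t1 : Matrix.trace Ω⁻¹ = ∑ i, ∑ j, M i j * Ω i j := by
    rw [← hMΩ, Matrix.trace]
    refine Finset.sum_congr rfl fun i _ => ?_
    rw [Matrix.diag_apply, Matrix.mul_apply]
    exact Finset.sum_congr rfl fun j _ => by rw [hsymm i j]
  have t2 : Matrix.trace M = ∑ i, ∑ j, M i j * (1 : Matrix (Fin N) (Fin N) ℝ) i j := by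
    rw [Matrix.trace]
    refine Finset.sum_congr rfl fun i _ => ?_
    rw [Matrix.diag_apply]
    simp [Matrix.one_apply, mul_ite, Finset.sum_ite_eq]
  have expand : ∑ i, ∑ j, M i j * (Ω i j + cκ * (1 : Matrix (Fin N) (Fin N) ℝ) i j)
      = Matrix.trace Ω⁻¹ + cκ * Matrix.trace M := by
    rw [t1, t2]
    simp only [Finset.mul_sum]
    rw [← Finset.sum_add_distrib]
    refine Finset.sum_congr rfl fun i _ => ?_
    rw [← Finset.sum_add_distrib]
    exact Finset.sum_congr rfl fun j _ => by ring
  rw [expand, hcκ]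
  simp only [measure_univ, probReal_univ, ENNReal.toReal_one, smul_eq_mul, one_mul, one_smul]
  ring


end PSAR
end
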